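/- arXiv:0905.0059 — 10 statements merged into one kernel-verified Lean document; each statement's English description precedes it below -/
import Mathlib

section
/- A sequence (d_1, …, d_r) of non-negative integers is the Wunram expansion of some integer d with 0 ≤ d < n if and only if both of the following hold: (i) 0 ≤ d_t ≤ b_t − 1 for every t; and (ii) whenever d_s = b_s − 1 and d_t = b_t − 1 for some s < t, there exists l with s < l < t and d_l ≤ b_l − 3. -/
/-- A "chain" starting just after `m`: an index `t ≤ r` with `dd t = b t - 1`
such that all intermediate indices have `dd l ≥ b l - 2`. -/
def chainP (r : ℕ) (dd b : ℕ → ℤ) (m : ℕ) : Prop :=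
  ∃ t, m < t ∧ t ≤ r ∧ dd t = b t - 1 ∧ ∀ l, m < l → l < t → b l - 2 ≤ dd l

/-- Characterization of Wunram expansions (Wunram's Lemma 1). -/
theorem stmt_2
    (n q : ℤ) (r : ℕ)
    (hq : 0 < q) (hqn : q < n) (hcop : IsCoprime q n)
    (hr : 1 ≤ r)
    (i b : ℕ → ℤ)
    (hi0 : i 0 = n) (hi1 : i 1 = q)
    (hrec : ∀ t, 1 ≤ t → t ≤ r → i (t - 1) = b t * i t - i (t + 1))
    (hlt : ∀ t, 1 ≤ t → t ≤ r → 0 ≤ i (t + 1) ∧ i (t + 1) < i t)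
    (hir : i r = 1) (hir1 : i (r + 1) = 0)
    (dd : ℕ → ℤ)
    (hddnn : ∀ t, 1 ≤ t → t ≤ r → 0 ≤ dd t) :
    (∃ d : ℤ, 0 ≤ d ∧ d < n ∧
      d = ∑ t ∈ Finset.Icc 1 r, dd t * i t ∧
      (∀ t0, t0 ≤ r →
        0 ≤ ∑ t ∈ Finset.Icc (t0 + 1) r, dd t * i t ∧
        ∑ t ∈ Finset.Icc (t0 + 1) r, dd t * i t < i t0)) ↔
    ((∀ t, 1 ≤ t → t ≤ r → dd t ≤ b t - 1) ∧
      (∀ s t, 1 ≤ s → s < t → t ≤ r → dd s = b s - 1 → dd t = b t - 1 →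
        ∃ l, s < l ∧ l < t ∧ dd l ≤ b l - 3)) := by
  have hipos : ∀ t, 1 ≤ t → t ≤ r → 1 ≤ i t := by
    intro t h1 h2
    have := hlt t h1 h2
    omega
  have hsplit : ∀ m, m < r →
      (∑ t ∈ Finset.Icc (m + 1) r, dd t * i t)
        = dd (m + 1) * i (m + 1) + ∑ t ∈ Finset.Icc (m + 1 + 1) r, dd t * i t := by
    intro m hm
    have hins : Finset.Icc (m + 1) r = insert (m + 1) (Finset.Icc (m + 1 + 1) r) := by
      ext x
      simp only [Finset.mem_Icc, Finset.mem_insert]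
      omega
    rw [hins, Finset.sum_insert (by simp)]
  have hSnn : ∀ m, 0 ≤ ∑ t ∈ Finset.Icc (m + 1) r, dd t * i t := by
    intro m
    refine Finset.sum_nonneg fun t ht => ?_
    rw [Finset.mem_Icc] at ht
    exact mul_nonneg (hddnn t (by omega) ht.2)
      (by have := hipos t (by omega) ht.2; omega)
  have hSr : (∑ t ∈ Finset.Icc (r + 1) r, dd t * i t) = 0 := by
    rw [Finset.Icc_eq_empty (by omega), Finset.sum_empty]
  constructor
  · rintro ⟨d, -, -, -, hS⟩
    constructor
    · intro t h1 h2
      obtain ⟨m, rfl⟩ : ∃ m, t = m + 1 := ⟨t - 1, by omega⟩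
      have h3 := (hS m (by omega)).2
      have h4 := hsplit m (by omega)
      have h5 := hSnn (m + 1)
      have h6 := hrec (m + 1) (by omega) h2
      simp only [Nat.add_sub_cancel] at h6
      have h7 := hipos (m + 1) (by omega) h2
      have h8 := (hlt (m + 1) (by omega) h2).1
      have hlt' : dd (m + 1) * i (m + 1) < b (m + 1) * i (m + 1) := by linarith
      have := lt_of_mul_lt_mul_right hlt' (by omega)
      omega
    · intro s t hs hst htr hds hdt
      by_contra hno
      push_neg at hno
      have key : ∀ k, ∀ m, m + k = t → 1 ≤ k → s ≤ m →
          i m - i (m + 1) ≤ ∑ t' ∈ Finset.Icc (m + 1) r, dd t' * i t' := by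
        intro k
        induction k with
        | zero => intro m _ h1 _; omega
        | succ k ih =>
          intro m hmk _ hsm
          rcases Nat.eq_zero_or_pos k with hk0 | hkpos
          · subst hk0
            have hmt : m + 1 = t := by omega
            have h4 := hsplit m (by omega)
            have h6 := hrec (m + 1) (by omega) (by omega)
            simp only [Nat.add_sub_cancel] at h6
            have h8 := (hlt (m + 1) (by omega) (by omega)).1
            have h5 := hSnn (m + 1)
            have hdt' : dd (m + 1) = b (m + 1) - 1 := by rw [hmt]; exact hdt
            have hdd : dd (m + 1) * i (m + 1)
                = b (m + 1) * i (m + 1) - i (m + 1) := by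
              rw [hdt']; ring
            linarith
          · have hih := ih (m + 1) (by omega) hkpos (by omega)
            have hl := hno (m + 1) (by omega) (by omega)
            have h4 := hsplit m (by omega)
            have h6 := hrec (m + 1) (by omega) (by omega)
            simp only [Nat.add_sub_cancel] at h6
            have h7 := hipos (m + 1) (by omega) (by omega)
            have hmul : (b (m + 1) - 2) * i (m + 1) ≤ dd (m + 1) * i (m + 1) :=
              mul_le_mul_of_nonneg_right (by omega) (by omega)
            nlinarith [hih, h6, hmul, h4]
      have hkey := key (t - s) s (by omega) (by omega) le_rfl
      obtain ⟨m0, rfl⟩ : ∃ m0, s = m0 + 1 := ⟨s - 1, by omega⟩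
      have h3 := (hS m0 (by omega)).2
      have h4 := hsplit m0 (by omega)
      have h6 := hrec (m0 + 1) (by omega) (by omega)
      simp only [Nat.add_sub_cancel] at h6
      have hdd : dd (m0 + 1) * i (m0 + 1)
          = b (m0 + 1) * i (m0 + 1) - i (m0 + 1) := by rw [hds]; ring
      linarith
  · rintro ⟨hbd, hgap⟩
    have key : ∀ k, ∀ m, m + k = r →
        (∑ t ∈ Finset.Icc (m + 1) r, dd t * i t) ≤ i m - 1 ∧
        (¬ chainP r dd b m →
          (∑ t ∈ Finset.Icc (m + 1) r, dd t * i t) ≤ i m - i (m + 1) - 1) := by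
      intro k
      induction k with
      | zero =>
        intro m hm
        obtain rfl : m = r := by omega
        rw [hSr]
        constructor
        · omega
        · intro _; omega
      | succ k ih =>
        intro m hm
        have hmr : m < r := by omega
        obtain ⟨ih1, ih2⟩ := ih (m + 1) (by omega)
        have h4 := hsplit m hmr
        have h6 := hrec (m + 1) (by omega) (by omega)
        simp only [Nat.add_sub_cancel] at h6
        have h7 := hipos (m + 1) (by omega) (by omega)
        have h8 := hlt (m + 1) (by omega) (by omega)
        have hb := hbd (m + 1) (by omega) (by omega)
        by_cases hB : dd (m + 1) = b (m + 1) - 1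
        · have hnc : ¬ chainP r dd b (m + 1) := by
            rintro ⟨t, ht1, ht2, ht3, ht4⟩
            obtain ⟨l, hl1, hl2, hl3⟩ := hgap (m + 1) t (by omega) ht1 ht2 hB ht3
            have := ht4 l hl1 hl2
            omega
          have hS' := ih2 hnc
          have hdd : dd (m + 1) * i (m + 1)
              = b (m + 1) * i (m + 1) - i (m + 1) := by rw [hB]; ring
          constructor
          · rw [h4]; linarith
          · intro hc
            exact absurd ⟨m + 1, by omega, by omega, hB, fun l h1 h2 => by omega⟩ hc
        · have hd2 : dd (m + 1) ≤ b (m + 1) - 2 := by omega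
          have hmul : dd (m + 1) * i (m + 1) ≤ (b (m + 1) - 2) * i (m + 1) :=
            mul_le_mul_of_nonneg_right hd2 (by omega)
          constructor
          · rw [h4]; nlinarith [ih1, h6, h8.1, h8.2, hmul]
          · intro hnc
            by_cases hd3 : dd (m + 1) ≤ b (m + 1) - 3
            · have hmul3 : dd (m + 1) * i (m + 1) ≤ (b (m + 1) - 3) * i (m + 1) :=
                mul_le_mul_of_nonneg_right hd3 (by omega)
              rw [h4]
              nlinarith [ih1, h6, h8.2, hmul3]
            · have hnc' : ¬ chainP r dd b (m + 1) := by
                rintro ⟨t, ht1, ht2, ht3, ht4⟩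
                refine hnc ⟨t, by omega, ht2, ht3, fun l h1 h2 => ?_⟩
                rcases Nat.lt_or_ge (m + 1) l with h | h
                · exact ht4 l h h2
                · have hlm : l = m + 1 := by omega
                  subst hlm
                  omega
              have hS' := ih2 hnc'
              rw [h4]
              nlinarith [hS', h6, hmul]
    refine ⟨∑ t ∈ Finset.Icc 1 r, dd t * i t, ?_, ?_, rfl, ?_⟩
    · have := hSnn 0
      simpa using this
    · have h0 := (key r 0 (by omega)).1
      simp only [Nat.zero_add, zero_add] at h0
      rw [hi0] at h0
      linarith
    · intro t0 ht0
      refine ⟨hSnn t0, ?_⟩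
      have := (key (r - t0) t0 (by omega)).1
      linarith
end

section
/- The dual sequence satisfies: 0 = j_0 < j_1 < j_2 < ⋯ < j_{r+1}; j_{r+1} = n; and 0 < j_r < n with q·j_r ≡ 1 (mod n), i.e. j_r is the inverse q' of q modulo n lying in {1, …, n−1}. -/
/-- Properties of the dual sequence. -/
theorem stmt_3
    (n q : ℤ) (r : ℕ)
    (hq : 0 < q) (hqn : q < n) (hcop : IsCoprime q n)
    (hr : 1 ≤ r)
    (i b : ℕ → ℤ)
    (hi0 : i 0 = n) (hi1 : i 1 = q)
    (hrec : ∀ t, 1 ≤ t → t ≤ r → i (t - 1) = b t * i t - i (t + 1))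
    (hlt : ∀ t, 1 ≤ t → t ≤ r → 0 ≤ i (t + 1) ∧ i (t + 1) < i t)
    (hir : i r = 1) (hir1 : i (r + 1) = 0)
    (j : ℕ → ℤ) (hj0 : j 0 = 0) (hj1 : j 1 = 1)
    (hjrec : ∀ t, 1 ≤ t → t ≤ r → j (t + 1) = b t * j t - j (t - 1)) :
    j 0 = 0 ∧
    (∀ t, t ≤ r → j t < j (t + 1)) ∧
    j (r + 1) = n ∧
    0 < j r ∧ j r < n ∧
    Int.ModEq n (q * j r) 1 := by
  -- positivity of i on [0, r]
  have hipos0 : ∀ k, k ≤ r → 1 ≤ i (r - k) := by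
    intro k
    induction k with
    | zero => intro _; simpa using hir.ge
    | succ k ih =>
      intro hk
      have hik := ih (by omega)
      by_cases hz : r - (k + 1) = 0
      · rw [hz, hi0]; omega
      · have ht1 : 1 ≤ r - (k + 1) := by omega
        have ht2 : r - (k + 1) ≤ r := by omega
        have := (hlt _ ht1 ht2).2
        have heq : r - (k + 1) + 1 = r - k := by omega
        rw [heq] at this
        omega
  have hipos : ∀ t, t ≤ r → 1 ≤ i t := by
    intro t ht
    have := hipos0 (r - t) (by omega)
    rwa [Nat.sub_sub_self ht] at this
  -- b t ≥ 2 on [1, r]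
  have hb : ∀ t, 1 ≤ t → t ≤ r → 2 ≤ b t := by
    intro t h1 h2
    have e := hrec t h1 h2
    have hp := hipos t h2
    have h0 := (hlt t h1 h2).1
    have hprev : i t < i (t - 1) := by
      rcases Nat.lt_or_ge t 2 with h | h
      · have ht1 : t = 1 := by omega
        rw [ht1]
        simpa [hi0, hi1] using hqn
      · have := (hlt (t - 1) (by omega) (by omega)).2
        have heq : t - 1 + 1 = t := by omega
        rw [heq] at this
        exact this
    by_contra hble
    push_neg at hble
    have hble' : b t ≤ 1 := by omega
    have : b t * i t ≤ 1 * i t := mul_le_mul_of_nonneg_right hble' (by linarith)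
    linarith
  -- strict monotonicity of j
  have hmono : ∀ t, t ≤ r → 0 ≤ j t ∧ j t < j (t + 1) := by
    intro t
    induction t with
    | zero => intro _; rw [hj0, hj1]; norm_num
    | succ s ih =>
      intro hs
      have ihs := ih (by omega)
      have e := hjrec (s + 1) (by omega) hs
      simp only [Nat.add_sub_cancel] at e
      have hb2 := hb (s + 1) (by omega) hs
      have h1 : 1 ≤ j (s + 1) := by
        have := ihs.1; have := ihs.2; omega
      refine ⟨by linarith [ihs.1, ihs.2], ?_⟩
      have h2 : 2 * j (s + 1) ≤ b (s + 1) * j (s + 1) := by nlinarith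
      have := ihs.2
      linarith
  -- determinant identity
  have hdet : ∀ t, t ≤ r → i t * j (t + 1) - i (t + 1) * j t = n := by
    intro t
    induction t with
    | zero => intro _; rw [hi0, hi1, hj0, hj1]; ring
    | succ s ih =>
      intro hs
      have e1 := hrec (s + 1) (by omega) hs
      have e2 := hjrec (s + 1) (by omega) hs
      simp only [Nat.add_sub_cancel] at e1 e2
      have ihs := ih (by omega)
      linear_combination i (s + 1) * e2 - j (s + 1) * e1 + ihs
  -- congruence n ∣ q * j t - i t
  have hmod : ∀ t, t ≤ r + 1 → n ∣ (q * j t - i t) := by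
    intro t
    induction t using Nat.strong_induction_on with
    | _ t ihm =>
      match t with
      | 0 => intro _; rw [hj0, hi0]; simp
      | 1 => intro _; rw [hj1, hi1]; simp
      | (s + 2) =>
        intro hle
        have e1 := hrec (s + 1) (by omega) (by omega)
        have e2 := hjrec (s + 1) (by omega) (by omega)
        simp only [Nat.add_sub_cancel] at e1 e2
        have d1 := ihm (s + 1) (by omega) (by omega)
        have d2 := ihm s (by omega) (by omega)
        have key : q * j (s + 2) - i (s + 2) =
            b (s + 1) * (q * j (s + 1) - i (s + 1)) - (q * j s - i s) := by
          linear_combination q * e2 - e1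
        rw [key]
        exact dvd_sub (d1.mul_left _) d2
  -- assemble
  have hjr1 : j (r + 1) = n := by
    have := hdet r le_rfl
    rw [hir, hir1] at this
    linarith
  have hjrpos : 0 < j r := by
    have h1 := hmono (r - 1) (by omega)
    have hre : r - 1 + 1 = r := by omega
    rw [hre] at h1
    omega
  have hjrlt : j r < n := by
    have := (hmono r le_rfl).2
    rw [hjr1] at this
    exact this
  refine ⟨hj0, fun t ht => (hmono t ht).2, hjr1, hjrpos, hjrlt, ?_⟩
  have hd := hmod r (by omega)
  rw [hir] at hd
  exact ((Int.modEq_iff_dvd.mpr hd)).symm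
end

section
/- Let d be an integer with 0 ≤ d < n, let (d_1, …, d_r) be its Wunram expansion, and put f = Σ_{t=1}^r d_t·j_t. Then q·f ≡ d (mod n). -/
/-- q·f ≡ d (mod n) where f = Σ d_t·j_t (Wunram's Lemma 2). -/
theorem stmt_5
    (n q : ℤ) (r : ℕ)
    (hq : 0 < q) (hqn : q < n) (hcop : IsCoprime q n)
    (hr : 1 ≤ r)
    (i b : ℕ → ℤ)
    (hi0 : i 0 = n) (hi1 : i 1 = q)
    (hrec : ∀ t, 1 ≤ t → t ≤ r → i (t - 1) = b t * i t - i (t + 1))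
    (hlt : ∀ t, 1 ≤ t → t ≤ r → 0 ≤ i (t + 1) ∧ i (t + 1) < i t)
    (hir : i r = 1) (hir1 : i (r + 1) = 0)
    (j : ℕ → ℤ) (hj0 : j 0 = 0) (hj1 : j 1 = 1)
    (hjrec : ∀ t, 1 ≤ t → t ≤ r → j (t + 1) = b t * j t - j (t - 1))
    (d : ℤ) (hd0 : 0 ≤ d) (hdn : d < n)
    (dd : ℕ → ℤ)
    (hddnn : ∀ t, 1 ≤ t → t ≤ r → 0 ≤ dd t)
    (hdsum : d = ∑ t ∈ Finset.Icc 1 r, dd t * i t)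
    (hdtail : ∀ t0, t0 ≤ r →
      0 ≤ ∑ t ∈ Finset.Icc (t0 + 1) r, dd t * i t ∧
      ∑ t ∈ Finset.Icc (t0 + 1) r, dd t * i t < i t0) :
    Int.ModEq n (q * ∑ t ∈ Finset.Icc 1 r, dd t * j t) d := by
  have key : ∀ t, t ≤ r → n ∣ q * j t - i t := by
    intro t
    induction t using Nat.strong_induction_on with
    | _ t ih =>
      intro ht
      match t with
      | 0 => simp [hj0, hi0]
      | 1 => simp [hj1, hi1]
      | (s+2) =>
        have h1 := ih (s+1) (by omega) (by omega)
        have h2 := ih s (by omega) (by omega)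
        have hrr := hrec (s+1) (by omega) (by omega)
        have hjj := hjrec (s+1) (by omega) (by omega)
        simp only [Nat.add_sub_cancel] at hrr hjj
        obtain ⟨c1, hc1⟩ := h1
        obtain ⟨c2, hc2⟩ := h2
        refine ⟨b (s+1) * c1 - c2, ?_⟩
        have : i (s+2) = b (s+1) * i (s+1) - i s := by linarith [hrr]
        rw [hjj, this]
        linear_combination b (s+1) * hc1 - hc2
  rw [Int.modEq_iff_dvd, hdsum, Finset.mul_sum, ← Finset.sum_sub_distrib]
  apply Finset.dvd_sum
  intro t htm
  simp only [Finset.mem_Icc] at htm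
  obtain ⟨c, hc⟩ := key t htm.2
  exact ⟨dd t * -c, by linear_combination (-dd t) * hc⟩
end

section
/- For every s ∈ {0, 1, …, r}, q·j_s ≡ i_s (mod n). -/
/-- q·j_s ≡ i_s (mod n) for all 0 ≤ s ≤ r. -/
theorem stmt_6
    (n q : ℤ) (r : ℕ)
    (hq : 0 < q) (hqn : q < n) (hcop : IsCoprime q n)
    (hr : 1 ≤ r)
    (i b : ℕ → ℤ)
    (hi0 : i 0 = n) (hi1 : i 1 = q)
    (hrec : ∀ t, 1 ≤ t → t ≤ r → i (t - 1) = b t * i t - i (t + 1))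
    (hlt : ∀ t, 1 ≤ t → t ≤ r → 0 ≤ i (t + 1) ∧ i (t + 1) < i t)
    (hir : i r = 1) (hir1 : i (r + 1) = 0)
    (j : ℕ → ℤ) (hj0 : j 0 = 0) (hj1 : j 1 = 1)
    (hjrec : ∀ t, 1 ≤ t → t ≤ r → j (t + 1) = b t * j t - j (t - 1)) :
    ∀ s, s ≤ r → Int.ModEq n (q * j s) (i s) := by
  intro s
  induction s using Nat.strong_induction_on with
  | _ s ih =>
    match s with
    | 0 =>
      intro _
      rw [hj0, hi0, mul_zero]
      exact (Int.modEq_iff_dvd.mpr (by simp)).symm.symm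
    | 1 =>
      intro _
      rw [hj1, hi1, mul_one]
    | (k + 2) =>
      intro hs
      have h1 : 1 ≤ k + 1 := by omega
      have h2 : k + 1 ≤ r := by omega
      have hj : j (k + 2) = b (k + 1) * j (k + 1) - j k := by
        have := hjrec (k + 1) h1 h2
        simpa using this
      have hi : i (k + 2) = b (k + 1) * i (k + 1) - i k := by
        have h := hrec (k + 1) h1 h2
        have e1 : k + 1 + 1 = k + 2 := rfl
        have e2 : k + 1 - 1 = k := rfl
        rw [e1, e2] at h
        linarith
      rw [hj, hi, mul_sub, mul_left_comm]
      exact ((ih (k + 1) (by omega) h2).mul_left (b (k + 1))).sub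
        (ih k (by omega) (by omega))
end

section
/- For every t ∈ {2, …, r+1} and all integers a, b with 0 ≤ a < i_{t−1} − i_t and 0 ≤ b < j_t − j_{t−1}, the integer i_{t−1} + a + b·q is special if and only if a = 0 and b = 0. -/
/-- i_{t-1} + a + b·q is special iff a = b = 0. -/
theorem stmt_7
    (n q : ℤ) (r : ℕ)
    (hq : 0 < q) (hqn : q < n) (hcop : IsCoprime q n)
    (hr : 1 ≤ r)
    (i b : ℕ → ℤ)
    (hi0 : i 0 = n) (hi1 : i 1 = q)
    (hrec : ∀ t, 1 ≤ t → t ≤ r → i (t - 1) = b t * i t - i (t + 1))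
    (hlt : ∀ t, 1 ≤ t → t ≤ r → 0 ≤ i (t + 1) ∧ i (t + 1) < i t)
    (hir : i r = 1) (hir1 : i (r + 1) = 0)
    (j : ℕ → ℤ) (hj0 : j 0 = 0) (hj1 : j 1 = 1)
    (hjrec : ∀ t, 1 ≤ t → t ≤ r → j (t + 1) = b t * j t - j (t - 1)) :
    ∀ t, 2 ≤ t → t ≤ r + 1 →
      ∀ a bb : ℤ, 0 ≤ a → a < i (t - 1) - i t → 0 ≤ bb → bb < j t - j (t - 1) →
        ((∃ s, s ≤ r ∧ Int.ModEq n (i (t - 1) + a + bb * q) (i s)) ↔ (a = 0 ∧ bb = 0)) := by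
  have hn : 0 < n := hq.trans hqn
  -- i is strictly decreasing
  have histep : ∀ u, u ≤ r → i (u + 1) < i u := by
    intro u hu
    rcases Nat.eq_zero_or_pos u with h0 | h1
    · subst h0; simpa [hi0, hi1] using hqn
    · exact (hlt u h1 hu).2
  have histep0 : ∀ u, u ≤ r → 0 ≤ i (u + 1) := by
    intro u hu
    rcases Nat.eq_zero_or_pos u with h0 | h1
    · subst h0; simpa [hi1] using hq.le
    · exact (hlt u h1 hu).1
  have hipos0 : ∀ u, u ≤ r + 1 → 0 ≤ i u := by
    intro u hu
    rcases Nat.eq_zero_or_pos u with h0 | h1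
    · subst h0; rw [hi0]; exact hn.le
    · obtain ⟨w, rfl⟩ : ∃ w, u = w + 1 := ⟨u - 1, by omega⟩
      exact histep0 w (by omega)
  have hichain : ∀ v, v ≤ r + 1 → ∀ u, u < v → i v < i u := by
    intro v
    induction v with
    | zero => intro _ u hu; exact absurd hu (by omega)
    | succ w ih =>
      intro hw u hu
      have h1 : i (w + 1) < i w := histep w (by omega)
      rcases Nat.lt_succ_iff_lt_or_eq.mp hu with h | h
      · exact h1.trans (ih (by omega) u h)
      · rw [h]; exact h1
  have himono : ∀ u v, u ≤ v → v ≤ r + 1 → i v ≤ i u := by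
    intro u v huv hv
    rcases eq_or_lt_of_le huv with h | h
    · rw [h]
    · exact (hichain v hv u h).le
  have hione : ∀ u, u ≤ r → 1 ≤ i u := by
    intro u hu
    have h := himono u r hu (by omega)
    rw [hir] at h; exact h
  -- b ≥ 2
  have hb2 : ∀ u, 1 ≤ u → u ≤ r → 2 ≤ b u := by
    intro u h1 hu
    have hr1 := hrec u h1 hu
    obtain ⟨w, rfl⟩ : ∃ w, u = w + 1 := ⟨u - 1, by omega⟩
    simp only [Nat.add_sub_cancel] at hr1
    have h2 : i (w + 1) < i w := histep w (by omega)
    have h3 : 0 ≤ i (w + 1 + 1) := histep0 (w + 1) hu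
    have h4 : 1 ≤ i (w + 1) := hione (w + 1) hu
    by_contra hb
    push_neg at hb
    have h5 : b (w + 1) * i (w + 1) ≤ 1 * i (w + 1) :=
      mul_le_mul_of_nonneg_right (by omega) (by linarith)
    linarith
  -- j facts
  have hjstep : ∀ u, u ≤ r → 0 ≤ j u ∧ j u < j (u + 1) := by
    intro u
    induction u with
    | zero => intro _; rw [hj0, hj1]; norm_num
    | succ w ih =>
      intro hw
      have hih := ih (by omega)
      have hjr := hjrec (w + 1) (by omega) hw
      simp only [Nat.add_sub_cancel] at hjr
      have hbb := hb2 (w + 1) (by omega) hw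
      have h1 : 1 ≤ j (w + 1) := by linarith [hih.1, hih.2]
      constructor
      · linarith
      · have h5 : 2 * j (w + 1) ≤ b (w + 1) * j (w + 1) :=
          mul_le_mul_of_nonneg_right hbb (by linarith)
        have := hih.2
        linarith [hjr]
  have hjchain : ∀ v, v ≤ r + 1 → ∀ u, u < v → j u < j v := by
    intro v
    induction v with
    | zero => intro _ u hu; exact absurd hu (by omega)
    | succ w ih =>
      intro hw u hu
      have h1 : j w < j (w + 1) := (hjstep w (by omega)).2
      rcases Nat.lt_succ_iff_lt_or_eq.mp hu with h | h
      · exact (ih (by omega) u h).trans h1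
      · rw [h]; exact h1
  have hjmono : ∀ u v, u ≤ v → v ≤ r + 1 → j u ≤ j v := by
    intro u v huv hv
    rcases eq_or_lt_of_le huv with h | h
    · rw [h]
    · exact (hjchain v hv u h).le
  have hjnn : ∀ u, u ≤ r + 1 → 0 ≤ j u := by
    intro u hu
    have := hjmono 0 u (by omega) hu
    rw [hj0] at this; exact this
  have hjone : ∀ u, 1 ≤ u → u ≤ r + 1 → 1 ≤ j u := by
    intro u h1 hu
    have := hjmono 1 u h1 hu
    rw [hj1] at this; exact this
  -- determinant identity
  have hdet : ∀ u, u ≤ r → i u * j (u + 1) - i (u + 1) * j u = n := by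
    intro u
    induction u with
    | zero => intro _; rw [hi0, hi1, hj0, hj1]; ring
    | succ w ih =>
      intro hw
      have hih := ih (by omega)
      have h1 := hrec (w + 1) (by omega) hw
      have h2 := hjrec (w + 1) (by omega) hw
      simp only [Nat.add_sub_cancel] at h1 h2
      have h1' : i (w + 1 + 1) = b (w + 1) * i (w + 1) - i w := by linarith
      linear_combination i (w + 1) * h2 - j (w + 1) * h1' + hih
  -- congruence  n ∣ q * j u - i u
  have hcongpair : ∀ u, u ≤ r → (n ∣ q * j u - i u) ∧ (n ∣ q * j (u + 1) - i (u + 1)) := by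
    intro u
    induction u with
    | zero =>
      intro _
      constructor
      · rw [hj0, hi0]; exact ⟨-1, by ring⟩
      · rw [hj1, hi1]; simp
    | succ w ih =>
      intro hw
      obtain ⟨d1, d2⟩ := ih (by omega)
      refine ⟨d2, ?_⟩
      have h1 := hrec (w + 1) (by omega) hw
      have h2 := hjrec (w + 1) (by omega) hw
      simp only [Nat.add_sub_cancel] at h1 h2
      have h1' : i (w + 1 + 1) = b (w + 1) * i (w + 1) - i w := by linarith
      have key : q * j (w + 1 + 1) - i (w + 1 + 1) =
          b (w + 1) * (q * j (w + 1) - i (w + 1)) - (q * j w - i w) := by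
        linear_combination q * h2 - h1'
      rw [key]
      exact dvd_sub (Dvd.dvd.mul_left d2 _) d1
  have hcong : ∀ u, u ≤ r + 1 → n ∣ q * j u - i u := by
    intro u hu
    rcases Nat.lt_or_ge u (r + 1) with h | h
    · exact (hcongpair u (by omega)).1
    · have hu' : u = r + 1 := by omega
      rw [hu']
      exact (hcongpair r le_rfl).2
  have hjr1 : j (r + 1) = n := by
    have h := hdet r le_rfl
    rw [hir, hir1] at h
    linarith
  -- basis decomposition
  have hF5 : ∀ w, w ≤ r → ∀ X1 X2 : ℤ, n ∣ X1 - q * X2 →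
      ∃ al be : ℤ, X1 = al * i w + be * i (w + 1) ∧ X2 = al * j w + be * j (w + 1) ∧
        al * n = X1 * j (w + 1) - X2 * i (w + 1) ∧ be * n = X2 * i w - X1 * j w := by
    intro w hw X1 X2 hX
    obtain ⟨k0, hk0⟩ := hX
    obtain ⟨k1, hk1⟩ := hcong w (by omega)
    obtain ⟨k2, hk2⟩ := hcong (w + 1) (by omega)
    have hd := hdet w hw
    refine ⟨k0 * j (w + 1) + X2 * k2, -(X2 * k1) - k0 * j w, ?_, ?_, ?_, ?_⟩
    · have e3 : (k0 * j (w + 1) + X2 * k2) * n = X1 * j (w + 1) - X2 * i (w + 1) := by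
        linear_combination (-(j (w + 1))) * hk0 - X2 * hk2
      have e4 : (-(X2 * k1) - k0 * j w) * n = X2 * i w - X1 * j w := by
        linear_combination j w * hk0 + X2 * hk1
      have h : ((k0 * j (w + 1) + X2 * k2) * i w + (-(X2 * k1) - k0 * j w) * i (w + 1)) * n
          = X1 * n := by
        linear_combination i w * e3 + i (w + 1) * e4 + X1 * hd
      exact (mul_right_cancel₀ (ne_of_gt hn) h).symm
    · have e3 : (k0 * j (w + 1) + X2 * k2) * n = X1 * j (w + 1) - X2 * i (w + 1) := by
        linear_combination (-(j (w + 1))) * hk0 - X2 * hk2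
      have e4 : (-(X2 * k1) - k0 * j w) * n = X2 * i w - X1 * j w := by
        linear_combination j w * hk0 + X2 * hk1
      have h : ((k0 * j (w + 1) + X2 * k2) * j w + (-(X2 * k1) - k0 * j w) * j (w + 1)) * n
          = X2 * n := by
        linear_combination j w * e3 + j (w + 1) * e4 + X2 * hd
      exact (mul_right_cancel₀ (ne_of_gt hn) h).symm
    · linear_combination (-(j (w + 1))) * hk0 - X2 * hk2
    · linear_combination j w * hk0 + X2 * hk1
  -- cone decomposition with nonnegative coefficients
  have hF7 : ∀ X1 X2 : ℤ, n ∣ X1 - q * X2 → 0 ≤ X1 → 0 ≤ X2 →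
      ∃ w, w ≤ r ∧ ∃ al be : ℤ, 0 ≤ al ∧ 0 ≤ be ∧
        X1 = al * i w + be * i (w + 1) ∧ X2 = al * j w + be * j (w + 1) := by
    intro X1 X2 hX hX1 hX2
    classical
    set P : ℕ → Prop := fun w => 0 ≤ i w * X2 - j w * X1 with hP
    have hP0 : P 0 := by
      show 0 ≤ i 0 * X2 - j 0 * X1
      rw [hi0, hj0]
      have := mul_nonneg hn.le hX2
      linarith
    set w := Nat.findGreatest P r with hwdef
    have hwr : w ≤ r := Nat.findGreatest_le r
    have hPw : P w := Nat.findGreatest_spec (Nat.zero_le r) hP0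
    obtain ⟨al, be, e1, e2, e3, e4⟩ := hF5 w hwr X1 X2 hX
    have hbe : 0 ≤ be := by
      have hPw' : 0 ≤ i w * X2 - j w * X1 := hPw
      have h : 0 ≤ be * n := by rw [e4]; linarith
      by_contra hneg
      push_neg at hneg
      have := mul_neg_of_neg_of_pos hneg hn
      linarith
    have hal : 0 ≤ al := by
      rcases Nat.lt_or_ge w r with hlt' | hge
      · have hnot : ¬ P (w + 1) :=
          Nat.findGreatest_is_greatest (Nat.lt_succ_self w) (by omega)
        have hnot' : i (w + 1) * X2 - j (w + 1) * X1 < 0 := by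
          by_contra hcon
          push_neg at hcon
          exact hnot hcon
        have h : 0 < al * n := by rw [e3]; linarith
        by_contra hneg
        push_neg at hneg
        have : al * n ≤ 0 := mul_nonpos_of_nonpos_of_nonneg hneg.le hn.le
        linarith
      · have hwr' : w = r := by omega
        have h : al * n = X1 * n := by
          rw [e3, hwr', hjr1, hir1]; ring
        have := mul_right_cancel₀ (ne_of_gt hn) h
        omega
    exact ⟨w, hwr, al, be, hal, hbe, e1, e2⟩
  -- LEMMA ★
  have hstar : ∀ σ : ℕ, σ ≤ r → ∀ X1 X2 : ℤ, n ∣ X1 - q * X2 → 0 ≤ X1 → 0 ≤ X2 →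
      X1 < i σ → X2 < j (σ + 1) → X1 = 0 ∧ X2 = 0 := by
    intro σ hσ X1 X2 hX hX1 hX2 hXi hXj
    obtain ⟨w, hwr, al, be, hal, hbe, e1, e2⟩ := hF7 X1 X2 hX hX1 hX2
    have hiw : 0 ≤ i w := hipos0 w (by omega)
    have hiw1 : 0 ≤ i (w + 1) := hipos0 (w + 1) (by omega)
    have hjw : 0 ≤ j w := hjnn w (by omega)
    have hjw1 : 0 ≤ j (w + 1) := hjnn (w + 1) (by omega)
    have hal0 : al = 0 := by
      by_contra h
      have hal1 : 1 ≤ al := by omega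
      have h2 : i w ≤ X1 := by
        have := le_mul_of_one_le_left hiw hal1
        have := mul_nonneg hbe hiw1
        linarith [e1]
      have h4 : σ < w := by
        by_contra h5
        push_neg at h5
        have := himono w σ h5 (by omega)
        linarith
      have h5 : j (σ + 1) ≤ j w := hjmono (σ + 1) w (by omega) (by omega)
      have h6 : j w ≤ X2 := by
        have := le_mul_of_one_le_left hjw hal1
        have := mul_nonneg hbe hjw1
        linarith [e2]
      linarith
    have hbe0 : be = 0 := by
      by_contra h
      have hbe1 : 1 ≤ be := by omega
      have h2 : j (w + 1) ≤ X2 := by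
        have := le_mul_of_one_le_left hjw1 hbe1
        rw [e2, hal0]; linarith
      have h4 : w + 1 < σ + 1 := by
        by_contra h5
        push_neg at h5
        have := hjmono (σ + 1) (w + 1) h5 (by omega)
        linarith
      have h5 : i σ ≤ i (w + 1) := himono (w + 1) σ (by omega) (by omega)
      have h6 : i (w + 1) ≤ X1 := by
        have := le_mul_of_one_le_left hiw1 hbe1
        rw [e1, hal0]; linarith
      linarith
    rw [hal0, hbe0] at e1 e2
    simp at e1 e2
    exact ⟨e1, e2⟩
  -- main statement
  intro t ht2 htr a bb ha0 haD hb0 hbE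
  obtain ⟨σ, rfl⟩ : ∃ σ, t = σ + 1 := ⟨t - 1, by omega⟩
  simp only [Nat.add_sub_cancel] at haD hbE ⊢
  have hσ1 : 1 ≤ σ := by omega
  have hσr : σ ≤ r := by omega
  have hD : 0 < i σ - i (σ + 1) := by
    have := hichain (σ + 1) (by omega) σ (by omega)
    linarith
  have hE : 0 < j (σ + 1) - j σ := by
    have := hjchain (σ + 1) (by omega) σ (by omega)
    linarith
  have hjσ1 : 1 ≤ j σ := hjone σ hσ1 (by omega)
  have hiσ1 : 0 ≤ i (σ + 1) := hipos0 (σ + 1) (by omega)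
  constructor
  · rintro ⟨s, hs, hmod⟩
    have hdvd : n ∣ i s - (i σ + a + bb * q) := hmod.dvd
    obtain ⟨k0, hk0⟩ := hdvd
    obtain ⟨kσ, hkσ⟩ := hcong σ (by omega)
    obtain ⟨kt, hkt⟩ := hcong (σ + 1) (by omega)
    obtain ⟨ks, hks⟩ := hcong s (by omega)
    rcases le_or_gt s σ with hcase | hcase
    · -- Case A : s ≤ σ
      have hcd : n ∣ a - q * (j s - j σ - bb) :=
        ⟨kσ - ks - k0, by linear_combination hkσ - hks - hk0⟩
      obtain ⟨al, be, e1, e2, _, _⟩ := hF5 σ hσr a (j s - j σ - bb) hcd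
      have hd := hdet σ hσr
      have hjs0 : 0 ≤ j s := hjnn s (by omega)
      have hjsσ : j s ≤ j σ := hjmono s σ hcase (by omega)
      have hc0 : j s - j σ - bb ≤ 0 := by linarith
      have hc1 : 1 - j (σ + 1) ≤ j s - j σ - bb := by linarith
      have hL : a * (j (σ + 1) - j σ) + (j s - j σ - bb) * (i σ - i (σ + 1))
          = (al + be) * n := by
        linear_combination (j (σ + 1) - j σ) * e1 + (i σ - i (σ + 1)) * e2 + (al + be) * hd
      have hid : n = (i σ - i (σ + 1)) * (j (σ + 1) - j σ)
          + i (σ + 1) * (j (σ + 1) - j σ) + j σ * (i σ - i (σ + 1)) := by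
        linear_combination -hd
      have hY : 0 ≤ i (σ + 1) * (j (σ + 1) - j σ) := mul_nonneg hiσ1 hE.le
      have hZ : i σ - i (σ + 1) ≤ j σ * (i σ - i (σ + 1)) :=
        le_mul_of_one_le_left hD.le hjσ1
      have hub : a * (j (σ + 1) - j σ) + (j s - j σ - bb) * (i σ - i (σ + 1)) < n := by
        have h1 : a * (j (σ + 1) - j σ) ≤ (i σ - i (σ + 1) - 1) * (j (σ + 1) - j σ) :=
          mul_le_mul_of_nonneg_right (by linarith) hE.le
        have h1' : (i σ - i (σ + 1) - 1) * (j (σ + 1) - j σ)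
            = (i σ - i (σ + 1)) * (j (σ + 1) - j σ) - (j (σ + 1) - j σ) := by ring
        have h2 : (j s - j σ - bb) * (i σ - i (σ + 1)) ≤ 0 :=
          mul_nonpos_of_nonpos_of_nonneg hc0 hD.le
        linarith [hid, hY, hZ, hE, hD]
      have hlb : -n < a * (j (σ + 1) - j σ) + (j s - j σ - bb) * (i σ - i (σ + 1)) := by
        have h1 : 0 ≤ a * (j (σ + 1) - j σ) := mul_nonneg ha0 hE.le
        have h2 : (1 - j (σ + 1)) * (i σ - i (σ + 1)) ≤
            (j s - j σ - bb) * (i σ - i (σ + 1)) :=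
          mul_le_mul_of_nonneg_right hc1 hD.le
        have h2' : (1 - j (σ + 1)) * (i σ - i (σ + 1)) =
            (i σ - i (σ + 1)) - j (σ + 1) * (i σ - i (σ + 1)) := by ring
        have h3 : j (σ + 1) * (i σ - i (σ + 1)) =
            (i σ - i (σ + 1)) * (j (σ + 1) - j σ) + j σ * (i σ - i (σ + 1)) := by ring
        linarith [hid, hY, hD]
      have hab : al + be = 0 := by
        have h1 : (al + be) * n < 1 * n := by rw [← hL]; linarith
        have h2 : (-1 : ℤ) * n < (al + be) * n := by rw [← hL]; linarith
        have h3 := lt_of_mul_lt_mul_right h1 hn.le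
        have h4 := lt_of_mul_lt_mul_right h2 hn.le
        omega
      have hbeal : be = -al := by omega
      have ha' : a = al * (i σ - i (σ + 1)) := by rw [e1, hbeal]; ring
      have hal0 : al = 0 := by
        rcases lt_trichotomy al 0 with h | h | h
        · have := mul_neg_of_neg_of_pos h hD
          linarith [ha' ▸ ha0]
        · exact h
        · have h1 : 1 ≤ al := by omega
          have := le_mul_of_one_le_left hD.le h1
          rw [ha'] at haD
          linarith
      have ha0' : a = 0 := by rw [ha', hal0]; ring
      have hbe0 : be = 0 := by omega
      have hc0' : j s - j σ - bb = 0 := by rw [e2, hal0, hbe0]; ring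
      have hbb0 : bb = 0 := by linarith
      exact ⟨ha0', hbb0⟩
    · -- Case B : σ < s
      exfalso
      have hts : σ + 1 ≤ s := hcase
      have his : 0 ≤ i s := hipos0 s (by omega)
      have hist : i s ≤ i (σ + 1) := himono (σ + 1) s hts (by omega)
      have hWd : n ∣ (i (σ + 1) + a - i s) - q * (j (σ + 1) - j σ - bb) :=
        ⟨kσ - kt - k0, by linear_combination hkσ - hkt - hk0⟩
      have hstar' := hstar σ hσr (i (σ + 1) + a - i s) (j (σ + 1) - j σ - bb) hWd
        (by linarith) (by linarith) (by linarith) (by linarith)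
      linarith [hstar'.2]
  · rintro ⟨rfl, rfl⟩
    exact ⟨σ, by omega, by simpa using Int.ModEq.refl (i σ)⟩
end

section
/- det C = n; moreover C·(i_1, …, i_r)ᵀ = n·e_1 and C·(j_1, …, j_r)ᵀ = n·e_r, where e_1 and e_r denote the first and last standard basis vectors of ℤ^r. Equivalently, the matrix n·C^{−1} = adj(C) has integer entries, its first column is (i_1, …, i_r) and its last column is (j_1, …, j_r). -/
private lemma sum_ite_fin {r : ℕ} (c : ℕ) (hc : c < r) (f : Fin r → ℤ) :
    (∑ t : Fin r, if (t : ℕ) = c then f t else 0) = f ⟨c, hc⟩ := by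
  have h : ∀ t : Fin r, (if (t : ℕ) = c then f t else 0)
      = (if t = (⟨c, hc⟩ : Fin r) then f t else 0) := by
    intro t
    congr 1
    rw [eq_iff_iff, Fin.ext_iff]
  rw [Finset.sum_congr rfl (fun t _ => h t), Finset.sum_ite_eq' Finset.univ]
  simp

private lemma sum_ite_fin' {r : ℕ} (c : ℕ) (h1 : 1 ≤ c) (hc : c ≤ r) (f : Fin r → ℤ) :
    (∑ t : Fin r, if (t : ℕ) + 1 = c then f t else 0) = f ⟨c - 1, by omega⟩ := by
  have h : ∀ t : Fin r, (if (t : ℕ) + 1 = c then f t else 0)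
      = (if t = (⟨c - 1, by omega⟩ : Fin r) then f t else 0) := by
    intro t
    congr 1
    rw [eq_iff_iff, Fin.ext_iff]
    simp only [Fin.val_mk]
    omega
  rw [Finset.sum_congr rfl (fun t _ => h t), Finset.sum_ite_eq' Finset.univ]
  simp

/-- det C = n, C·i = n·e₁, C·j = n·e_r, and the first and last
columns of adj(C) = n·C⁻¹ are (i_1,…,i_r) and (j_1,…,j_r). -/
theorem stmt_8
    (n q : ℤ) (r : ℕ)
    (hq : 0 < q) (hqn : q < n) (hcop : IsCoprime q n)
    (hr : 1 ≤ r)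
    (i b : ℕ → ℤ)
    (hi0 : i 0 = n) (hi1 : i 1 = q)
    (hrec : ∀ t, 1 ≤ t → t ≤ r → i (t - 1) = b t * i t - i (t + 1))
    (hlt : ∀ t, 1 ≤ t → t ≤ r → 0 ≤ i (t + 1) ∧ i (t + 1) < i t)
    (hir : i r = 1) (hir1 : i (r + 1) = 0)
    (j : ℕ → ℤ) (hj0 : j 0 = 0) (hj1 : j 1 = 1)
    (hjrec : ∀ t, 1 ≤ t → t ≤ r → j (t + 1) = b t * j t - j (t - 1))
    (C : Matrix (Fin r) (Fin r) ℤ)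
    (hC : ∀ s t : Fin r, C s t =
      if s = t then b (s.1 + 1)
      else if s.1 + 1 = t.1 ∨ t.1 + 1 = s.1 then -1 else 0) :
    C.det = n ∧
    (∀ s : Fin r, (C.mulVec fun t : Fin r => i (t.1 + 1)) s =
      if s.1 = 0 then n else 0) ∧
    (∀ s : Fin r, (C.mulVec fun t : Fin r => j (t.1 + 1)) s =
      if s.1 = r - 1 then n else 0) ∧
    (∀ s : Fin r, C.adjugate s ⟨0, by omega⟩ = i (s.1 + 1)) ∧
    (∀ s : Fin r, C.adjugate s ⟨r - 1, by omega⟩ = j (s.1 + 1)) := by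
  have hn0 : (0 : ℤ) < n := lt_trans hq hqn
  -- invariant: i t * j (t+1) - i (t+1) * j t = n
  have hinv : ∀ t, t ≤ r → i t * j (t + 1) - i (t + 1) * j t = n := by
    intro t
    induction t with
    | zero => intro _; rw [hi0, hi1, hj0, hj1]; ring
    | succ t ih =>
      intro ht
      have ih' := ih (by omega)
      have h1 := hrec (t + 1) (by omega) ht
      have h2 := hjrec (t + 1) (by omega) ht
      simp only [Nat.add_sub_cancel] at h1 h2
      linear_combination ih' + i (t + 1) * h2 - j (t + 1) * h1
  have hjr : j (r + 1) = n := by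
    have := hinv r le_rfl
    rw [hir, hir1] at this
    linarith
  -- expansion of mulVec
  have hmul : ∀ (v : Fin r → ℤ) (s : Fin r), (C.mulVec v) s =
      (∑ t : Fin r, if (t : ℕ) + 1 = (s : ℕ) then -v t else 0)
      + b ((s : ℕ) + 1) * v s
      + (∑ t : Fin r, if (t : ℕ) = (s : ℕ) + 1 then -v t else 0) := by
    intro v s
    have h : ∀ t : Fin r, C s t * v t =
        (if (t : ℕ) + 1 = (s : ℕ) then -v t else 0)
        + (if t = s then b ((s : ℕ) + 1) * v t else 0)
        + (if (t : ℕ) = (s : ℕ) + 1 then -v t else 0) := by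
      intro t
      rw [hC]
      by_cases h1 : s = t
      · subst h1
        rw [if_pos rfl, if_pos rfl, if_neg (by omega), if_neg (by omega)]
        ring
      · rw [if_neg h1, if_neg (Ne.symm h1)]
        have h1' : (s : ℕ) ≠ (t : ℕ) := fun h => h1 (Fin.ext h)
        by_cases h2 : (t : ℕ) + 1 = (s : ℕ)
        · rw [if_pos (Or.inr h2), if_pos h2, if_neg (by omega)]
          ring
        · by_cases h3 : (t : ℕ) = (s : ℕ) + 1
          · rw [if_pos (Or.inl (by omega)), if_neg h2, if_pos h3]
            ring
          · rw [if_neg (by omega), if_neg h2, if_neg h3]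
            ring
    show (∑ t : Fin r, C s t * v t) = _
    rw [Finset.sum_congr rfl (fun t _ => h t), Finset.sum_add_distrib,
      Finset.sum_add_distrib, Finset.sum_ite_eq' Finset.univ]
    simp
  -- C · i = n e₁
  have hCi : ∀ s : Fin r, (C.mulVec fun t : Fin r => i (t.1 + 1)) s =
      if s.1 = 0 then n else 0 := by
    intro s
    rw [hmul]
    have e3 : (∑ t : Fin r, if (t : ℕ) = (s : ℕ) + 1 then -i (t.1 + 1) else 0)
        = -i ((s : ℕ) + 2) := by
      by_cases h : (s : ℕ) + 1 < r
      · rw [sum_ite_fin ((s : ℕ) + 1) h]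
      · have hs : (s : ℕ) + 1 = r := by have := s.2; omega
        rw [Finset.sum_eq_zero (fun t _ => by rw [if_neg (by omega)])]
        rw [show (s : ℕ) + 2 = r + 1 by omega, hir1]
        ring
    rw [e3]
    by_cases h0 : (s : ℕ) = 0
    · rw [Finset.sum_eq_zero (fun t _ => by rw [if_neg (by omega)]), if_pos h0]
      have h1 := hrec 1 le_rfl hr
      simp only [h0]
      norm_num at h1 ⊢
      rw [hi0] at h1
      linarith
    · rw [sum_ite_fin' (s : ℕ) (by omega) (le_of_lt s.2), if_neg h0]
      simp only [Fin.val_mk]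
      have h1 := hrec ((s : ℕ) + 1) (by omega) s.2
      simp only [Nat.add_sub_cancel] at h1
      rw [show (s : ℕ) - 1 + 1 = (s : ℕ) by omega]
      linarith
  -- C · j = n e_r
  have hCj : ∀ s : Fin r, (C.mulVec fun t : Fin r => j (t.1 + 1)) s =
      if s.1 = r - 1 then n else 0 := by
    intro s
    rw [hmul]
    have e1 : (∑ t : Fin r, if (t : ℕ) + 1 = (s : ℕ) then -j (t.1 + 1) else 0)
        = -j (s : ℕ) := by
      by_cases h0 : (s : ℕ) = 0
      · rw [Finset.sum_eq_zero (fun t _ => by rw [if_neg (by omega)]), h0, hj0]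
        ring
      · rw [sum_ite_fin' (s : ℕ) (by omega) (le_of_lt s.2)]
        simp only [Fin.val_mk]
        rw [show (s : ℕ) - 1 + 1 = (s : ℕ) by omega]
    rw [e1]
    by_cases h : (s : ℕ) + 1 < r
    · rw [sum_ite_fin ((s : ℕ) + 1) h, if_neg (by omega)]
      simp only [Fin.val_mk]
      have h2 := hjrec ((s : ℕ) + 1) (by omega) (by omega)
      simp only [Nat.add_sub_cancel] at h2
      linarith
    · have hs : (s : ℕ) + 1 = r := by have := s.2; omega
      rw [Finset.sum_eq_zero (fun t _ => by rw [if_neg (by omega)]),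
        if_pos (by omega)]
      have h2 := hjrec r hr le_rfl
      rw [hjr] at h2
      have hb : b ((s : ℕ) + 1) = b r := by rw [hs]
      have hj1' : j ((s : ℕ) + 1) = j r := by rw [hs]
      have hj2' : j (s : ℕ) = j (r - 1) := by rw [show (s : ℕ) = r - 1 by omega]
      rw [hb, hj1', hj2']
      linarith
  -- adjugate (r-1, 0) entry = 1
  have hA : C.adjugate ⟨r - 1, by omega⟩ ⟨0, by omega⟩ = 1 := by
    rw [Matrix.adjugate_apply]
    obtain ⟨m, rfl⟩ : ∃ m, r = m + 1 := ⟨r - 1, by omega⟩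
    set D := C.updateRow ⟨0, by omega⟩ (Pi.single ⟨m + 1 - 1, by omega⟩ 1) with hD
    have hσ : ∀ k : Fin (m + 1), ((finRotate (m + 1) k : Fin (m + 1)) : ℕ)
        = if (k : ℕ) = m then 0 else (k : ℕ) + 1 := by
      intro k
      rw [finRotate_succ_apply, Fin.val_add_one]
      congr 1
      rw [eq_iff_iff, Fin.ext_iff, Fin.val_last]
    have hEval1 : ∀ k t : Fin (m + 1), (k : ℕ) = m →
        D.submatrix (finRotate (m + 1)) id k t
        = if (t : ℕ) = m then 1 else 0 := by
      intro k t hk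
      simp only [Matrix.submatrix_apply, id_eq, hD, Matrix.updateRow_apply]
      have hk0 : finRotate (m + 1) k = ⟨0, by omega⟩ := by
        apply Fin.ext
        rw [hσ, if_pos hk]
      rw [if_pos hk0]
      by_cases ht : (t : ℕ) = m
      · rw [if_pos ht]
        have htt : t = (⟨m + 1 - 1, by omega⟩ : Fin (m + 1)) :=
          Fin.ext (show (t : ℕ) = m + 1 - 1 by omega)
        rw [htt, Pi.single_eq_same]
      · rw [if_neg ht]
        exact Pi.single_eq_of_ne
          (Fin.ne_of_val_ne (show (t : ℕ) ≠ m + 1 - 1 by omega)) 1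
    have hEval2 : ∀ (k : Fin (m + 1)), (hk : (k : ℕ) < m) → ∀ t : Fin (m + 1),
        D.submatrix (finRotate (m + 1)) id k t
        = C ⟨(k : ℕ) + 1, by omega⟩ t := by
      intro k hk t
      simp only [Matrix.submatrix_apply, id_eq, hD, Matrix.updateRow_apply]
      have hk1 : finRotate (m + 1) k = ⟨(k : ℕ) + 1, by omega⟩ := by
        apply Fin.ext
        rw [hσ, if_neg (by omega)]
      rw [hk1,
        if_neg (Fin.ne_of_val_ne (show (k : ℕ) + 1 ≠ (0 : ℕ) by omega))]
    have htri : (D.submatrix (finRotate (m + 1)) id).BlockTriangular id := by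
      intro k t hkt
      have hkt' : (t : ℕ) < (k : ℕ) := hkt
      by_cases hk : (k : ℕ) = m
      · rw [hEval1 k t hk, if_neg (by omega)]
      · have hk' : (k : ℕ) < m := by have := k.2; omega
        rw [hEval2 k hk' t, hC,
          if_neg (Fin.ne_of_val_ne (show (k : ℕ) + 1 ≠ (t : ℕ) by omega)),
          if_neg (show ¬((k : ℕ) + 1 + 1 = (t : ℕ) ∨ (t : ℕ) + 1 = (k : ℕ) + 1)
            by omega)]
    have hdetE : (D.submatrix (finRotate (m + 1)) id).det = (-1 : ℤ) ^ m := by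
      rw [Matrix.det_of_upperTriangular htri, Fin.prod_univ_castSucc]
      have hlast : D.submatrix (finRotate (m + 1)) id (Fin.last m) (Fin.last m)
          = 1 := by
        rw [hEval1 _ _ (Fin.val_last m), if_pos (Fin.val_last m)]
      have hmid : ∀ k : Fin m, D.submatrix (finRotate (m + 1)) id
          k.castSucc k.castSucc = -1 := by
        intro k
        have hklt : (k.castSucc : ℕ) < m := by
          rw [Fin.coe_castSucc]; exact k.2
        rw [hEval2 k.castSucc hklt, hC,
          if_neg (Fin.ne_of_val_ne
            (show (k.castSucc : ℕ) + 1 ≠ (k.castSucc : ℕ) by omega)),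
          if_pos (Or.inr rfl)]
      rw [hlast, Finset.prod_congr rfl (fun k _ => hmid k), mul_one,
        Finset.prod_const]
      simp
    have hperm := Matrix.det_permute (finRotate (m + 1)) D
    rw [hdetE, sign_finRotate] at hperm
    simp only [Units.val_pow_eq_pow_val, Units.val_neg, Units.val_one,
      Int.cast_pow, Int.cast_neg, Int.cast_one, Int.cast_id, Nat.add_sub_cancel] at hperm
    have hpow : (-1 : ℤ) ^ m * (-1 : ℤ) ^ m = 1 := by
      rw [← pow_add, ← two_mul, pow_mul]
      norm_num
    have h2 : ((-1 : ℤ) ^ m) * ((-1 : ℤ) ^ m * D.det) = ((-1 : ℤ) ^ m) * ((-1 : ℤ) ^ m) := by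
      rw [← hperm]
    rw [← mul_assoc, hpow, one_mul] at h2
    exact h2
  -- key: adjugate columns
  have hkey : ∀ (v : Fin r → ℤ) (c : ℕ) (hc : c < r),
      (C.mulVec v = fun s : Fin r => if (s : ℕ) = c then n else 0) →
      ∀ s : Fin r, C.adjugate s ⟨c, hc⟩ * n = C.det * v s := by
    intro v c hc hv s
    have h1 : C.adjugate.mulVec (C.mulVec v) = C.det • v := by
      rw [Matrix.mulVec_mulVec, Matrix.adjugate_mul, Matrix.smul_mulVec,
        Matrix.one_mulVec]
    rw [hv] at h1
    have h2 := congrFun h1 s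
    have h3 : (C.adjugate.mulVec fun u : Fin r => if (u : ℕ) = c then n else 0) s
        = C.adjugate s ⟨c, hc⟩ * n := by
      show (∑ t : Fin r, C.adjugate s t * (if (t : ℕ) = c then n else 0)) = _
      have h4 : ∀ t : Fin r, C.adjugate s t * (if (t : ℕ) = c then n else 0)
          = (if (t : ℕ) = c then C.adjugate s t * n else 0) := by
        intro t
        rw [mul_ite, mul_zero]
      rw [Finset.sum_congr rfl (fun t _ => h4 t), sum_ite_fin c hc]
    rw [h3] at h2
    exact h2
  have hkeyi := hkey (fun t : Fin r => i (t.1 + 1)) 0 (by omega) (funext hCi)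
  have hkeyj := hkey (fun t : Fin r => j (t.1 + 1)) (r - 1) (by omega)
    (funext hCj)
  have hdet : C.det = n := by
    have h5 := hkeyi ⟨r - 1, by omega⟩
    rw [hA, one_mul] at h5
    simp only [Fin.val_mk, show r - 1 + 1 = r by omega, hir, mul_one] at h5
    exact h5.symm
  refine ⟨hdet, hCi, hCj, fun s => ?_, fun s => ?_⟩
  · have h6 := hkeyi s
    rw [hdet] at h6
    exact mul_right_cancel₀ (ne_of_gt hn0) (h6.trans (mul_comm n _))
  · have h6 := hkeyj s
    rw [hdet] at h6
    exact mul_right_cancel₀ (ne_of_gt hn0) (h6.trans (mul_comm n _))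
end

section
/- Suppose a ≥ 0, b ≥ 0 and c < 0 are integers, and (e_1, …, e_r) are non-negative integers solving the associated linear system for (f, g, a, b, c) (with e_0 = b and e_{r+1} = a). Define e''_t = e_{t−1} − 2e_t + e_{t+1} for 1 ≤ t ≤ r. Then: (1) e''_t ≥ −1 for every t ∈ {1, …, r}; (2) if e''_s = e''_t = −1 for some 1 ≤ s < t ≤ r, then there exists l with s < l < t and e''_l ≥ 1; (3) there exists t_0 ∈ {0, 1, …, r+1} such that e_0 ≥ e_1 ≥ ⋯ ≥ e_{t_0} ≤ e_{t_0+1} ≤ ⋯ ≤ e_{r+1}. -/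
set_option maxHeartbeats 1000000


/-- Corollary on near-convexity of solutions to the linear system. -/
theorem stmt_10
    (n q : ℤ) (r : ℕ)
    (hq : 0 < q) (hqn : q < n) (hcop : IsCoprime q n)
    (hr : 1 ≤ r)
    (i b : ℕ → ℤ)
    (hi0 : i 0 = n) (hi1 : i 1 = q)
    (hrec : ∀ t, 1 ≤ t → t ≤ r → i (t - 1) = b t * i t - i (t + 1))
    (hlt : ∀ t, 1 ≤ t → t ≤ r → 0 ≤ i (t + 1) ∧ i (t + 1) < i t)
    (hir : i r = 1) (hir1 : i (r + 1) = 0)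
    -- f, g and their Wunram expansions
    (f g : ℤ) (hf0 : 0 ≤ f) (hfn : f ≤ n - 1) (hg0 : 0 ≤ g) (hgn : g ≤ n - 1)
    (ff : ℕ → ℤ)
    (hffnn : ∀ t, 1 ≤ t → t ≤ r → 0 ≤ ff t)
    (hfsum : f = ∑ t ∈ Finset.Icc 1 r, ff t * i t)
    (hftail : ∀ t0, t0 ≤ r →
      0 ≤ ∑ t ∈ Finset.Icc (t0 + 1) r, ff t * i t ∧
      ∑ t ∈ Finset.Icc (t0 + 1) r, ff t * i t < i t0)
    (gg : ℕ → ℤ)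
    (hggnn : ∀ t, 1 ≤ t → t ≤ r → 0 ≤ gg t)
    (hgsum : g = ∑ t ∈ Finset.Icc 1 r, gg t * i t)
    (hgtail : ∀ t0, t0 ≤ r →
      0 ≤ ∑ t ∈ Finset.Icc (t0 + 1) r, gg t * i t ∧
      ∑ t ∈ Finset.Icc (t0 + 1) r, gg t * i t < i t0)
    -- a ≥ 0, b ≥ 0, c < 0 and a nonnegative solution (e_t) of the linear system
    (a bb c : ℤ) (ha : 0 ≤ a) (hbb : 0 ≤ bb) (hc : c < 0)
    (e : ℕ → ℤ)
    (he0 : e 0 = bb) (her1 : e (r + 1) = a)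
    (henn : ∀ t, 1 ≤ t → t ≤ r → 0 ≤ e t)
    (hesys : ∀ t, 1 ≤ t → t ≤ r →
      e (t - 1) - b t * e t + e (t + 1) = gg t - ff t - (b t - 2) * c) :
    (∀ t, 1 ≤ t → t ≤ r → -1 ≤ e (t - 1) - 2 * e t + e (t + 1)) ∧
    (∀ s t, 1 ≤ s → s < t → t ≤ r →
      e (s - 1) - 2 * e s + e (s + 1) = -1 →
      e (t - 1) - 2 * e t + e (t + 1) = -1 →
      ∃ l, s < l ∧ l < t ∧ 1 ≤ e (l - 1) - 2 * e l + e (l + 1)) ∧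
    (∃ t0, t0 ≤ r + 1 ∧
      (∀ t, t + 1 ≤ t0 → e (t + 1) ≤ e t) ∧
      (∀ t, t0 ≤ t → t ≤ r → e t ≤ e (t + 1))) := by
    classical
  -- basic positivity facts about i
  have hipos : ∀ t, 1 ≤ t → t ≤ r → 1 ≤ i t := by
    intro t h1 h2
    obtain ⟨h3, h4⟩ := hlt t h1 h2
    omega
  have hidec : ∀ t, 1 ≤ t → t ≤ r → i t < i (t - 1) := by
    intro t h1 h2
    rcases eq_or_lt_of_le h1 with h | h
    · subst h
      show i 1 < i (1 - 1)
      norm_num [hi0, hi1]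
      exact hqn
    · have h5 := (hlt (t - 1) (by omega) (by omega)).2
      have ht : t - 1 + 1 = t := by omega
      rwa [ht] at h5
  -- b t ≥ 2
  have hb2 : ∀ t, 1 ≤ t → t ≤ r → 2 ≤ b t := by
    intro t h1 h2
    by_contra hcon
    push_neg at hcon
    have h3 := hrec t h1 h2
    have h4 := hipos t h1 h2
    have h5 := hidec t h1 h2
    have h6 := (hlt t h1 h2).1
    have hm : b t * i t ≤ 1 * i t :=
      mul_le_mul_of_nonneg_right (by omega) (by linarith)
    linarith
  -- splitting off the first term of a tail sum
  have hsplitf : ∀ t, 1 ≤ t → t ≤ r →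
      ∑ u ∈ Finset.Icc t r, ff u * i u
        = ff t * i t + ∑ u ∈ Finset.Icc (t + 1) r, ff u * i u := by
    intro t _ h2
    rw [← Finset.Ioc_insert_left h2, Finset.sum_insert Finset.left_notMem_Ioc,
      Finset.Icc_add_one_left_eq_Ioc]
  -- ff t ≤ b t - 1
  have hfle : ∀ t, 1 ≤ t → t ≤ r → ff t ≤ b t - 1 := by
    intro t h1 h2
    have hta := hftail (t - 1) (by omega)
    rw [show t - 1 + 1 = t from by omega] at hta
    have hsp := hsplitf t h1 h2
    have htl := (hftail t h2).1
    have h3 := hrec t h1 h2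
    have h4 := hipos t h1 h2
    have h6 := (hlt t h1 h2).1
    by_contra hcon
    push_neg at hcon
    have hm : b t * i t ≤ ff t * i t :=
      mul_le_mul_of_nonneg_right (by omega) (by linarith)
    have := hta.2
    linarith
  -- the key rewriting of e''
  have hkey : ∀ t, 1 ≤ t → t ≤ r →
      e (t - 1) - 2 * e t + e (t + 1) = (b t - 2) * (e t - c) + gg t - ff t := by
    intro t h1 h2
    linear_combination hesys t h1 h2
  have hec : ∀ t, 1 ≤ t → t ≤ r → 1 ≤ e t - c := by
    intro t h1 h2
    have := henn t h1 h2
    omega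
  -- Part 1
  have part1 : ∀ t, 1 ≤ t → t ≤ r → -1 ≤ e (t - 1) - 2 * e t + e (t + 1) := by
    intro t h1 h2
    rw [hkey t h1 h2]
    have h3 := hb2 t h1 h2
    have h4 := hec t h1 h2
    have h5 := hggnn t h1 h2
    have h6 := hfle t h1 h2
    nlinarith [mul_nonneg (by linarith : (0:ℤ) ≤ b t - 2) (by linarith : (0:ℤ) ≤ e t - c - 1)]
  -- equality case forces ff t = b t - 1
  have heq1 : ∀ t, 1 ≤ t → t ≤ r →
      e (t - 1) - 2 * e t + e (t + 1) = -1 → ff t = b t - 1 := by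
    intro t h1 h2 hE
    rw [hkey t h1 h2] at hE
    have h3 := hb2 t h1 h2
    have h4 := hec t h1 h2
    have h5 := hggnn t h1 h2
    have h6 := hfle t h1 h2
    have : b t - 1 ≤ ff t := by
      nlinarith [mul_nonneg (by linarith : (0:ℤ) ≤ b t - 2) (by linarith : (0:ℤ) ≤ e t - c - 1)]
    linarith
  -- e'' t ≤ 0 forces ff t ≥ b t - 2
  have hmid : ∀ t, 1 ≤ t → t ≤ r →
      e (t - 1) - 2 * e t + e (t + 1) ≤ 0 → b t - 2 ≤ ff t := by
    intro t h1 h2 hE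
    rw [hkey t h1 h2] at hE
    have h3 := hb2 t h1 h2
    have h4 := hec t h1 h2
    have h5 := hggnn t h1 h2
    nlinarith [mul_nonneg (by linarith : (0:ℤ) ≤ b t - 2) (by linarith : (0:ℤ) ≤ e t - c - 1)]
  -- telescoping identity
  have tele : ∀ s, 1 ≤ s → ∀ t, s ≤ t → t ≤ r →
      (b s - 1) * i s + ∑ l ∈ Finset.Icc (s + 1) t, (b l - 2) * i l
        = i (s - 1) - i t + i (t + 1) := by
    intro s hs1 t hst
    induction t, hst using Nat.le_induction with
    | base =>
      intro hsr
      rw [Finset.Icc_eq_empty (by omega), Finset.sum_empty]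
      linear_combination - hrec s hs1 hsr
    | succ t ht ih =>
      intro htr
      have ih' := ih (by omega)
      rw [Finset.sum_Icc_succ_top (by omega : s + 1 ≤ t + 1)]
      have h2 := hrec (t + 1) (by omega) htr
      simp only [Nat.add_sub_cancel] at h2
      linear_combination ih' - h2
  -- Part 2
  have part2 : ∀ s t, 1 ≤ s → s < t → t ≤ r →
      e (s - 1) - 2 * e s + e (s + 1) = -1 →
      e (t - 1) - 2 * e t + e (t + 1) = -1 →
      ∃ l, s < l ∧ l < t ∧ 1 ≤ e (l - 1) - 2 * e l + e (l + 1) := by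
    intro s t hs1 hst htr hEs hEt
    by_contra hcon
    push_neg at hcon
    have hfs := heq1 s hs1 (by omega) hEs
    have hft := heq1 t (by omega) htr hEt
    -- lower bound on terms of the sum over Icc (s+1) t
    have hmidf : ∀ l ∈ Finset.Icc (s + 1) t, (b l - 2) * i l ≤ ff l * i l := by
      intro l hl
      rw [Finset.mem_Icc] at hl
      have hil := hipos l (by omega) (by omega)
      rcases eq_or_lt_of_le hl.2 with h | h
      · subst h
        rw [hft]
        nlinarith
      · have hle0 : e (l - 1) - 2 * e l + e (l + 1) ≤ 0 := by
          have := hcon l (by omega) (by omega)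
          omega
        have := hmid l (by omega) (by omega) hle0
        exact mul_le_mul_of_nonneg_right this (by linarith)
    have hta := hftail (s - 1) (by omega)
    rw [show s - 1 + 1 = s from by omega] at hta
    have hsp := hsplitf s hs1 (by omega)
    have hsplit2 : ∑ u ∈ Finset.Icc (s + 1) r, ff u * i u
        = ∑ u ∈ Finset.Icc (s + 1) t, ff u * i u
          + ∑ u ∈ Finset.Icc (t + 1) r, ff u * i u := by
      rw [Finset.Icc_add_one_left_eq_Ioc, Finset.Icc_add_one_left_eq_Ioc, Finset.Icc_add_one_left_eq_Ioc]
      exact (Finset.sum_Ioc_consecutive _ (by omega) (by omega)).symm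
    have htail_t := (hftail t htr).1
    have hlow : ∑ u ∈ Finset.Icc (s + 1) t, (b u - 2) * i u
        ≤ ∑ u ∈ Finset.Icc (s + 1) t, ff u * i u := Finset.sum_le_sum hmidf
    have hdecomp : ∑ u ∈ Finset.Icc (s + 1) t, ff u * i u
        = ∑ u ∈ Finset.Icc (s + 1) t, (b u - 2) * i u
          + ∑ u ∈ Finset.Icc (s + 1) t, (ff u * i u - (b u - 2) * i u) := by
      rw [← Finset.sum_add_distrib]
      exact Finset.sum_congr rfl (fun u _ => by ring)
    have hextra : i t ≤ ∑ u ∈ Finset.Icc (s + 1) t, (ff u * i u - (b u - 2) * i u) := by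
      have hts : t ∈ Finset.Icc (s + 1) t := by
        rw [Finset.mem_Icc]; omega
      have hone : i t ≤ ff t * i t - (b t - 2) * i t := by
        rw [hft]; ring_nf; rfl
      calc i t ≤ ff t * i t - (b t - 2) * i t := hone
        _ ≤ _ := Finset.single_le_sum
            (f := fun u => ff u * i u - (b u - 2) * i u)
            (fun u hu => by have := hmidf u hu; linarith) hts
    have htel := tele s hs1 t (le_of_lt hst) htr
    have hit1 := (hlt t (by omega) htr).1
    have hfsi : ff s * i s = (b s - 1) * i s := by rw [hfs]
    have := hta.2
    linarith
  refine ⟨part1, part2, ?_⟩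
  -- no up-step before a down-step
  have nud : ∀ v u, v ≤ u → u ≤ r → e v < e (v + 1) → e u ≤ e (u + 1) := by
    intro v u hvu hur hup
    rcases eq_or_lt_of_le hvu with h | hvltu
    · subst h; linarith
    by_contra hdown
    push_neg at hdown
    set P : ℕ → Prop := fun p => e (p - 1) + 1 ≤ e p with hP
    have hPv : P (v + 1) := by
      simp only [hP, Nat.add_sub_cancel]
      linarith
    set s := Nat.findGreatest P u with hsdef
    have hsP : e (s - 1) + 1 ≤ e s := Nat.findGreatest_spec (by omega : v + 1 ≤ u) hPv
    have hvs : v + 1 ≤ s := Nat.le_findGreatest (by omega) hPv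
    have hsu : s ≤ u := Nat.findGreatest_le u
    have hgt : ∀ p, s < p → p ≤ u → e p ≤ e (p - 1) := by
      intro p h1 h2
      have := Nat.findGreatest_is_greatest h1 h2
      simp only [hP, not_le] at this
      linarith
    have hs1 : 1 ≤ s := by omega
    have hds1 : e (s + 1) ≤ e s := by
      rcases eq_or_lt_of_le hsu with h' | h'
      · rw [h']; linarith
      · have := hgt (s + 1) (by omega) (by omega)
        simpa using this
    have hp1s := part1 s hs1 (by omega)
    have hEs : e (s - 1) - 2 * e s + e (s + 1) = -1 := by linarith
    have hds0 : e (s + 1) = e s := by linarith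
    rcases eq_or_lt_of_le hsu with h' | hslt
    · rw [h'] at hds0; linarith
    have hex : ∃ p, s + 1 < p ∧ p ≤ u + 1 ∧ e p + 1 ≤ e (p - 1) := by
      refine ⟨u + 1, by omega, le_refl _, ?_⟩
      simp only [Nat.add_sub_cancel]
      linarith
    obtain ⟨t', ⟨ht'1, ht'2, ht'3⟩, hmin⟩ :
        ∃ p, (s + 1 < p ∧ p ≤ u + 1 ∧ e p + 1 ≤ e (p - 1)) ∧
          ∀ q, q < p → ¬(s + 1 < q ∧ q ≤ u + 1 ∧ e q + 1 ≤ e (q - 1)) :=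
      ⟨Nat.find hex, Nat.find_spec hex, fun q hq => Nat.find_min hex hq⟩
    have hzero : ∀ l, s + 1 ≤ l → l < t' → e l = e (l - 1) := by
      intro l hl1 hl2
      rcases eq_or_lt_of_le hl1 with h'' | h''
      · rw [← h'']
        simpa using hds0
      · have ha1 := hgt l (by omega) (by omega)
        have hb1 := hmin l hl2
        push_neg at hb1
        have := hb1 h'' (by omega)
        linarith
    set t2 := t' - 1 with ht2def
    have ht2s : s + 1 ≤ t2 := by omega
    have ht2u : t2 ≤ u := by omega
    have ht2t' : t2 + 1 = t' := by omega
    have hz2 : e t2 = e (t2 - 1) := hzero t2 ht2s (by omega)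
    have hEt2 : e (t2 - 1) - 2 * e t2 + e (t2 + 1) = -1 := by
      have hp := part1 t2 (by omega) (by omega)
      have hstep : e (t2 + 1) + 1 ≤ e t2 := by
        rw [ht2t']
        exact ht'3
      linarith
    obtain ⟨l, hl1, hl2, hl3⟩ := part2 s t2 hs1 (by omega) (by omega) hEs hEt2
    have hz3 : e l = e (l - 1) := hzero l (by omega) (by omega)
    have hz4 : e (l + 1) = e l := by
      have := hzero (l + 1) (by omega) (by omega)
      simpa using this
    linarith
  -- construct t0
  by_cases hup : ∃ t, t ≤ r ∧ e t < e (t + 1)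
  · refine ⟨Nat.find hup, ?_, ?_, ?_⟩
    · have := (Nat.find_spec hup).1; omega
    · intro t ht
      have hmin := Nat.find_min hup (show t < Nat.find hup by omega)
      push_neg at hmin
      have htr2 : t ≤ r := by
        have := (Nat.find_spec hup).1; omega
      linarith [hmin htr2]
    · intro t h1 h2
      exact nud (Nat.find hup) t h1 h2 (Nat.find_spec hup).2
  · push_neg at hup
    refine ⟨r + 1, le_refl _, ?_, ?_⟩
    · intro t ht
      exact hup t (by omega)
    · intro t h1 h2
      omega
end

section
/- Let t ∈ {1, …, r} and let a be an integer with 0 ≤ a < i_{t−1} − i_t. Then the Wunram expansion (d_1, …, d_r) of a satisfies: d_k = 0 for every k < t; d_t ≤ b_t − 2; and whenever d_k = b_k − 1 for some k > t, there exists l with t ≤ l < k and d_l ≤ b_l − 3. -/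
/-- Shape of the Wunram expansion of 0 ≤ a < i_{t−1} − i_t. -/
theorem stmt_12
    (n q : ℤ) (r : ℕ)
    (hq : 0 < q) (hqn : q < n) (hcop : IsCoprime q n)
    (hr : 1 ≤ r)
    (i b : ℕ → ℤ)
    (hi0 : i 0 = n) (hi1 : i 1 = q)
    (hrec : ∀ t, 1 ≤ t → t ≤ r → i (t - 1) = b t * i t - i (t + 1))
    (hlt : ∀ t, 1 ≤ t → t ≤ r → 0 ≤ i (t + 1) ∧ i (t + 1) < i t)
    (hir : i r = 1) (hir1 : i (r + 1) = 0)
    (t : ℕ) (ht1 : 1 ≤ t) (htr : t ≤ r)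
    (a : ℤ) (ha0 : 0 ≤ a) (ha : a < i (t - 1) - i t)
    (dd : ℕ → ℤ)
    (hddnn : ∀ k, 1 ≤ k → k ≤ r → 0 ≤ dd k)
    (hdsum : a = ∑ k ∈ Finset.Icc 1 r, dd k * i k)
    (hdtail : ∀ t0, t0 ≤ r →
      0 ≤ ∑ k ∈ Finset.Icc (t0 + 1) r, dd k * i k ∧
      ∑ k ∈ Finset.Icc (t0 + 1) r, dd k * i k < i t0) :
    (∀ k, 1 ≤ k → k < t → dd k = 0) ∧
    dd t ≤ b t - 2 ∧
    (∀ k, t < k → k ≤ r → dd k = b k - 1 →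
      ∃ l, t ≤ l ∧ l < k ∧ dd l ≤ b l - 3) := by
  -- monotonicity of i on [1, r+1]
  have hmono : ∀ j m : ℕ, 1 ≤ j → j ≤ m → m ≤ r + 1 → i m ≤ i j := by
    intro j m hj hjm
    induction m, hjm using Nat.le_induction with
    | base => intro _; exact le_refl _
    | succ m hm ih =>
      intro hm1
      have hmr : m ≤ r := by omega
      have h2 : i (m + 1) ≤ i m := le_of_lt (hlt m (le_trans hj hm) hmr).2
      exact le_trans h2 (ih (by omega))
  have hpos : ∀ m : ℕ, 1 ≤ m → m ≤ r → 0 < i m := by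
    intro m h1 h2
    have := hmono m r h1 h2 (by omega)
    rw [hir] at this
    linarith
  -- splitting off the first term of a tail sum
  have hsplit : ∀ m : ℕ, 1 ≤ m → m ≤ r →
      (∑ k ∈ Finset.Icc m r, dd k * i k)
        = dd m * i m + ∑ k ∈ Finset.Icc (m + 1) r, dd k * i k := by
    intro m h1 h2
    have hmem : m ∈ Finset.Icc m r := Finset.mem_Icc.mpr ⟨le_refl m, h2⟩
    rw [Finset.Icc_add_one_left_eq_Ioc, ← Finset.Icc_erase_left]
    exact (Finset.add_sum_erase _ (fun k => dd k * i k) hmem).symm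
  -- Part 1 (with the running tail identity)
  have hA : ∀ m : ℕ, 1 ≤ m → m ≤ t →
      (a = ∑ k ∈ Finset.Icc m r, dd k * i k) ∧
      (∀ j, 1 ≤ j → j < m → dd j = 0) := by
    intro m
    induction m with
    | zero => omega
    | succ m ih =>
      intro _ hmt
      by_cases hm0 : m = 0
      · subst hm0
        exact ⟨hdsum, by omega⟩
      · have hm1 : 1 ≤ m := by omega
        obtain ⟨hSa, hz⟩ := ih hm1 (by omega)
        have hmr : m ≤ r := by omega
        have hsp := hsplit m hm1 hmr
        have htail := (hdtail m hmr).1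
        have him : i (t - 1) ≤ i m := hmono m (t - 1) hm1 (by omega) (by omega)
        have hit : 0 < i t := hpos t ht1 htr
        have hdm : dd m = 0 := by
          by_contra hne
          have h1 : 1 ≤ dd m := by have := hddnn m hm1 hmr; omega
          have h2 : i m ≤ dd m * i m :=
            le_mul_of_one_le_left (le_of_lt (hpos m hm1 hmr)) h1
          rw [hsp] at hSa
          linarith
        constructor
        · rw [hSa, hsp, hdm]; ring
        · intro j hj1 hj2
          rcases Nat.lt_or_ge j m with h | h
          · exact hz j hj1 h
          · have : j = m := by omega
            rw [this]; exact hdm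
  obtain ⟨hSt, hzero⟩ := hA t ht1 (le_refl t)
  refine ⟨hzero, ?_, ?_⟩
  -- Part 2
  · have hsp := hsplit t ht1 htr
    have htail := (hdtail t htr).1
    have hrect := hrec t ht1 htr
    have hnn1 := (hlt t ht1 htr).1
    have hit := hpos t ht1 htr
    have e : (b t - 1) * i t = b t * i t - i t := by ring
    rw [hsp] at hSt
    have hlt' : dd t * i t < (b t - 1) * i t := by linarith
    have : dd t < b t - 1 := lt_of_mul_lt_mul_right hlt' (le_of_lt hit)
    omega
  -- Part 3
  · intro k hk1 hk2 hdk
    by_contra hcon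
    push_neg at hcon
    have hpn : ∀ l, t ≤ l → l < k → b l - 3 < dd l := fun l h1 h2 => hcon l h1 h2
    have key : ∀ d m : ℕ, m + d = k → t ≤ m →
        i (m - 1) - i m ≤ ∑ j ∈ Finset.Icc m r, dd j * i j := by
      intro d
      induction d with
      | zero =>
        intro m hm htm
        have hmk : m = k := by omega
        subst hmk
        have h1 : 1 ≤ m := by omega
        have hmr : m ≤ r := hk2
        have hsp := hsplit m h1 hmr
        have htail := (hdtail m hmr).1
        have hrecm := hrec m h1 hmr
        have hnn := (hlt m h1 hmr).1
        have e : (b m - 1) * i m = b m * i m - i m := by ring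
        rw [hsp, hdk]
        linarith
      | succ d ihd =>
        intro m hm htm
        have ih := ihd (m + 1) (by omega) (by omega)
        simp only [Nat.add_sub_cancel] at ih
        have h1 : 1 ≤ m := by omega
        have hmr : m ≤ r := by omega
        have hsp := hsplit m h1 hmr
        have hrecm := hrec m h1 hmr
        have hb := hpn m htm (by omega)
        have him : 0 ≤ i m := le_of_lt (hpos m h1 hmr)
        have hdd : (b m - 2) * i m ≤ dd m * i m :=
          mul_le_mul_of_nonneg_right (by omega) him
        have e : (b m - 2) * i m = b m * i m - 2 * i m := by ring
        rw [hsp]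
        linarith
    have hfin := key (k - t) t (by omega) (le_refl t)
    rw [← hSt] at hfin
    linarith
end

section
/- Let η_{st} denote the (s,t) entry of adj(C) = n·C^{−1}. For arbitrary integers a, b, c and arbitrary integers f_1, …, f_r, g_1, …, g_r, define rational numbers e_t = (1/n)·(a·j_t + b·i_t + c·(n − i_t − j_t) − Σ_{s=1}^r (g_s − f_s)·η_{st}) for 1 ≤ t ≤ r, and set e_0 = b, e_{r+1} = a. Then e_{t−1} − b_t·e_t + e_{t+1} = g_t − f_t − (b_t − 2)·c for every 1 ≤ t ≤ r. -/
set_option maxHeartbeats 1600000 in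
/-- The rational numbers e_t defined via adj(C) solve the linear system. -/
theorem stmt_13
    (n q : ℤ) (r : ℕ)
    (hq : 0 < q) (hqn : q < n) (hcop : IsCoprime q n)
    (hr : 1 ≤ r)
    (i b : ℕ → ℤ)
    (hi0 : i 0 = n) (hi1 : i 1 = q)
    (hrec : ∀ t, 1 ≤ t → t ≤ r → i (t - 1) = b t * i t - i (t + 1))
    (hlt : ∀ t, 1 ≤ t → t ≤ r → 0 ≤ i (t + 1) ∧ i (t + 1) < i t)
    (hir : i r = 1) (hir1 : i (r + 1) = 0)
    (j : ℕ → ℤ) (hj0 : j 0 = 0) (hj1 : j 1 = 1)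
    (hjrec : ∀ t, 1 ≤ t → t ≤ r → j (t + 1) = b t * j t - j (t - 1))
    (C : Matrix (Fin r) (Fin r) ℤ)
    (hC : ∀ s t : Fin r, C s t =
      if s = t then b (s.1 + 1)
      else if s.1 + 1 = t.1 ∨ t.1 + 1 = s.1 then -1 else 0)
    (η : ℕ → ℕ → ℤ)
    (hη : ∀ s t : Fin r, η (s.1 + 1) (t.1 + 1) = C.adjugate s t)
    (a bb c : ℤ) (f g : ℕ → ℤ)
    (e : ℕ → ℚ)
    (he0 : e 0 = (bb : ℚ)) (her1 : e (r + 1) = (a : ℚ))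
    (hedef : ∀ t, 1 ≤ t → t ≤ r →
      e t = ((a : ℚ) * (j t : ℚ) + (bb : ℚ) * (i t : ℚ)
        + (c : ℚ) * ((n : ℚ) - (i t : ℚ) - (j t : ℚ))
        - ∑ s ∈ Finset.Icc 1 r, ((g s : ℚ) - (f s : ℚ)) * (η s t : ℚ)) / (n : ℚ)) :
    ∀ t, 1 ≤ t → t ≤ r →
      e (t - 1) - (b t : ℚ) * e t + e (t + 1) =
        (g t : ℚ) - (f t : ℚ) - ((b t : ℚ) - 2) * (c : ℚ) := by
  have hn : (0:ℤ) < n := lt_trans hq hqn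
  have hnQ : (n:ℚ) ≠ 0 := by exact_mod_cast hn.ne'
  obtain ⟨m, rfl⟩ : ∃ m, r = m + 1 := ⟨r - 1, by omega⟩
  -- symmetry of C
  have hsym : ∀ s t : Fin (m+1), C s t = C t s := by
    intro s t
    rw [hC, hC]
    by_cases h1 : s = t
    · subst h1; rfl
    · rw [if_neg h1, if_neg (Ne.symm h1)]
      exact if_congr or_comm rfl rfl
  -- row sums against a vector
  have hrow : ∀ (A : Fin (m+1) → ℤ) (s : Fin (m+1)),
      ∑ x : Fin (m+1), C s x * A x =
        b (s.1+1) * A s + (if h : s.1+1 < m+1 then -A ⟨s.1+1, h⟩ else 0)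
          + (if h : 0 < s.1 then -A ⟨s.1-1, by omega⟩ else 0) := by
    intro A s
    have hterm : ∀ x : Fin (m+1), C s x * A x =
        (if s = x then b (s.1+1) * A x else 0) + (if x.1 = s.1+1 then -A x else 0)
          + (if x.1+1 = s.1 then -A x else 0) := by
      intro x
      rw [hC s x]
      by_cases h1 : s = x
      · have hv : s.1 = x.1 := congrArg Fin.val h1
        rw [if_pos h1, if_pos h1, if_neg (by omega), if_neg (by omega)]
        ring
      · rw [if_neg h1, if_neg h1]
        have hv : s.1 ≠ x.1 := fun h => h1 (Fin.ext h)
        by_cases h2 : s.1 + 1 = x.1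
        · rw [if_pos (Or.inl h2), if_pos h2.symm, if_neg (by omega)]
          ring
        · by_cases h3 : x.1 + 1 = s.1
          · rw [if_pos (Or.inr h3), if_neg (fun h => h2 h.symm), if_pos h3]
            ring
          · rw [if_neg (not_or.mpr ⟨h2, h3⟩), if_neg (fun h => h2 h.symm), if_neg h3]
            ring
    rw [Finset.sum_congr rfl (fun x _ => hterm x)]
    rw [Finset.sum_add_distrib, Finset.sum_add_distrib]
    congr 1
    congr 1
    · rw [Finset.sum_ite_eq]
      simp
    · by_cases h : s.1 + 1 < m+1
      · rw [dif_pos h]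
        have hc : ∀ x : Fin (m+1), (x.1 = s.1+1) = (x = ⟨s.1+1, h⟩) := by
          intro x; rw [Fin.ext_iff]
        simp_rw [hc]
        rw [Finset.sum_ite_eq']
        simp
      · rw [dif_neg h]
        apply Finset.sum_eq_zero
        intro x _
        rw [if_neg (by omega)]
    · by_cases h : 0 < s.1
      · rw [dif_pos h]
        have hc : ∀ x : Fin (m+1), (x.1 + 1 = s.1) = (x = ⟨s.1-1, by omega⟩) := by
          intro x; rw [Fin.ext_iff]; simp; omega
        simp_rw [hc]
        rw [Finset.sum_ite_eq']
        simp
      · rw [dif_neg h]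
        apply Finset.sum_eq_zero
        intro x _
        rw [if_neg (by omega)]
  -- C applied to the i-vector
  have hmv : ∀ s : Fin (m+1), ∑ x : Fin (m+1), C s x * i (x.1+1)
      = if s.1 = 0 then n else 0 := by
    intro s
    rw [hrow (fun x => i (x.1+1)) s]
    have hre := hrec (s.1+1) (by omega) (by omega)
    simp only [Nat.add_sub_cancel] at hre
    by_cases h2 : s.1 + 1 < m+1
    · rw [dif_pos h2]
      by_cases h3 : 0 < s.1
      · rw [dif_pos h3, if_neg (by omega)]
        have : s.1 - 1 + 1 = s.1 := by omega
        rw [this]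
        linarith [hre]
      · rw [dif_neg h3, if_pos (by omega)]
        have hs0 : s.1 = 0 := by omega
        simp only [hs0] at hre ⊢
        rw [hi0] at hre
        linarith [hre]
    · have hsm : s.1 = m := by omega
      rw [dif_neg h2]
      have hre' : i (m+1-1) = b (m+1) * i (m+1) - i (m+1+1) := hrec (m+1) (by omega) (by omega)
      by_cases h3 : 0 < s.1
      · rw [dif_pos h3, if_neg (by omega)]
        have h4 : s.1 - 1 + 1 = s.1 := by omega
        simp only [h4, hsm] at hre ⊢
        have h5 : m + 1 - 1 = m := by omega
        rw [h5, hir1] at hre'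
        have h6 : m - 1 + 1 = m := by omega
        rw [h6]
        linarith [hre']
      · have hm0 : m = 0 := by omega
        rw [dif_neg h3, if_pos (by omega)]
        subst hm0
        simp only [hsm] at hre ⊢
        rw [hi0, hir1] at hre
        linarith [hre]
  -- determinant of C is n
  have hdet : C.det = n := by
    classical
    -- the corner entry of the adjugate is 1
    have hcorner : C.adjugate (Fin.last m) 0 = 1 := by
      rw [Matrix.adjugate_apply]
      set M := C.updateRow 0 (Pi.single (Fin.last m) (1:ℤ)) with hMdef
      have hrot : ∀ p : Fin (m+1), ∀ hp : p.1 < m,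
          finRotate (m+1) p = ⟨p.1+1, Nat.succ_lt_succ hp⟩ := by
        intro p hp
        exact finRotate_of_lt hp
      have htri : (M.submatrix (finRotate (m+1)) id).BlockTriangular id := by
        intro p q' hpq
        simp only [Matrix.submatrix_apply, id_eq] at hpq ⊢
        by_cases hp : p.1 < m
        · rw [hrot p hp, hMdef]
          rw [Matrix.updateRow_ne (by rw [Ne, Fin.ext_iff, Fin.val_zero]; simp)]
          rw [hC]
          rw [if_neg (by simp [Fin.ext_iff]; omega), if_neg (by simp; omega)]
        · have hpl : p = Fin.last m := by
            apply Fin.ext; simp [Fin.last]; omega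
          rw [hpl, finRotate_last, hMdef, Matrix.updateRow_self]
          apply Pi.single_eq_of_ne
          intro hq
          rw [hpl, hq] at hpq
          exact lt_irrefl _ hpq
      have hdiag : (M.submatrix (finRotate (m+1)) id).det = (-1)^m := by
        rw [Matrix.det_of_upperTriangular htri]
        rw [Fin.prod_univ_castSucc]
        have hlast : (M.submatrix (finRotate (m+1)) id) (Fin.last m) (Fin.last m) = 1 := by
          simp only [Matrix.submatrix_apply, id_eq, finRotate_last, hMdef,
            Matrix.updateRow_self]
          simp
        have hcs : ∀ k : Fin m,
            (M.submatrix (finRotate (m+1)) id) k.castSucc k.castSucc = -1 := by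
          intro k
          simp only [Matrix.submatrix_apply, id_eq]
          rw [hrot _ (by simpa using k.2), hMdef]
          rw [Matrix.updateRow_ne (by simp [Fin.ext_iff])]
          rw [hC]
          rw [if_neg (by simp [Fin.ext_iff]), if_pos (by simp [Fin.ext_iff])]
        rw [hlast, Finset.prod_congr rfl (fun k _ => hcs k)]
        simp
      have hperm := Matrix.det_permute (finRotate (m+1)) M
      rw [hdiag, sign_finRotate] at hperm
      have hperm' : ((-1:ℤ))^m = (-1:ℤ)^m * M.det := by
        simpa using hperm
      have hpow : ((-1:ℤ))^m ≠ 0 := pow_ne_zero _ (by norm_num)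
      have := mul_left_cancel₀ hpow (by rw [← hperm', mul_one] :
        ((-1:ℤ))^m * 1 = (-1:ℤ)^m * M.det)
      exact this.symm
    -- Cramer-type evaluation
    have hv : C.mulVec (fun x : Fin (m+1) => i (x.1+1))
        = fun s => if s.1 = 0 then (n:ℤ) else 0 := by
      funext s
      simp only [Matrix.mulVec, dotProduct]
      exact hmv s
    have h3 : C.adjugate.mulVec (C.mulVec (fun x : Fin (m+1) => i (x.1+1)))
        = C.det • (fun x : Fin (m+1) => i (x.1+1)) := by
      rw [Matrix.mulVec_mulVec, Matrix.adjugate_mul, Matrix.smul_mulVec,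
        Matrix.one_mulVec]
    rw [hv] at h3
    have h4 := congrFun h3 (Fin.last m)
    simp only [Matrix.mulVec, dotProduct, Pi.smul_apply, smul_eq_mul] at h4
    have h5 : ∑ x : Fin (m+1), C.adjugate (Fin.last m) x * (if x.1 = 0 then (n:ℤ) else 0)
        = C.adjugate (Fin.last m) 0 * n := by
      have hc : ∀ x : Fin (m+1), (x.1 = 0) = (x = 0) := by
        intro x; rw [Fin.ext_iff, Fin.val_zero]
      simp_rw [hc, mul_ite, mul_zero]
      rw [Finset.sum_ite_eq']
      simp
    rw [h5, hcorner] at h4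
    simp only [Fin.val_last, hir] at h4
    simpa using h4.symm
  -- extended adjugate
  set Adj : ℕ → ℕ → ℤ := fun s u =>
    if h : s ≤ m+1 ∧ u ≤ m+1 ∧ 1 ≤ s ∧ 1 ≤ u then
      C.adjugate ⟨s-1, by omega⟩ ⟨u-1, by omega⟩ else 0 with hAdjdef
  have hAdj_pos : ∀ s u (h1 : 1 ≤ s) (h2 : s ≤ m+1) (h3 : 1 ≤ u) (h4 : u ≤ m+1),
      Adj s u = C.adjugate ⟨s-1, by omega⟩ ⟨u-1, by omega⟩ := by
    intro s u h1 h2 h3 h4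
    rw [hAdjdef]
    exact dif_pos ⟨h2, h4, h1, h3⟩
  have hAdj_zero : ∀ s u, ¬(s ≤ m+1 ∧ u ≤ m+1 ∧ 1 ≤ s ∧ 1 ≤ u) → Adj s u = 0 := by
    intro s u h
    rw [hAdjdef]
    exact dif_neg h
  have hAdjeta : ∀ s u, 1 ≤ s → s ≤ m+1 → 1 ≤ u → u ≤ m+1 → η s u = Adj s u := by
    intro s u hs1 hs2 hu1 hu2
    rw [hAdj_pos s u hs1 hs2 hu1 hu2]
    have := hη ⟨s-1, by omega⟩ ⟨u-1, by omega⟩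
    simp only at this
    rw [← this]
    congr 1 <;> omega
  have hkey : ∀ s u, 1 ≤ s → s ≤ m+1 → 1 ≤ u → u ≤ m+1 →
      Adj s (u-1) - b u * Adj s u + Adj s (u+1) = -n * (if s = u then 1 else 0) := by
    intro s u hs1 hs2 hu1 hu2
    have hσ : s - 1 < m + 1 := by omega
    have hυ : u - 1 < m + 1 := by omega
    have hac : C.adjugate * C = (n:ℤ) • (1 : Matrix (Fin (m+1)) (Fin (m+1)) ℤ) := by
      rw [Matrix.adjugate_mul, hdet]
    have h0 := congrFun (congrFun hac ⟨s-1, hσ⟩) ⟨u-1, hυ⟩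
    rw [Matrix.mul_apply] at h0
    have hsum : ∑ x : Fin (m+1), C.adjugate ⟨s-1, hσ⟩ x * C x ⟨u-1, hυ⟩
        = ∑ x : Fin (m+1), C ⟨u-1, hυ⟩ x * C.adjugate ⟨s-1, hσ⟩ x := by
      apply Finset.sum_congr rfl
      intro x _
      rw [hsym x ⟨u-1, hυ⟩, mul_comm]
    rw [hsum] at h0
    rw [hrow (fun x => C.adjugate ⟨s-1, hσ⟩ x) ⟨u-1, hυ⟩] at h0
    simp only [Matrix.smul_apply, Matrix.one_apply, smul_eq_mul] at h0
    have h7 : u - 1 + 1 = u := by omega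
    simp only [h7] at h0
    have hif : ((⟨s-1, hσ⟩ : Fin (m+1)) = (⟨u-1, hυ⟩ : Fin (m+1))) ↔ (s = u) := by
      rw [Fin.ext_iff]
      show s - 1 = u - 1 ↔ s = u
      omega
    rw [show (if (⟨s-1, hσ⟩ : Fin (m+1)) = (⟨u-1, hυ⟩ : Fin (m+1)) then (1:ℤ) else 0)
        = (if s = u then 1 else 0) from if_congr hif rfl rfl] at h0
    rw [hAdj_pos s u hs1 hs2 hu1 hu2]
    by_cases hc1 : u < m + 1
    · rw [dif_pos hc1] at h0
      rw [hAdj_pos s (u+1) (by omega) (by omega) (by omega) (by omega)]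
      have e1 : (⟨u+1-1, by omega⟩ : Fin (m+1)) = ⟨u, hc1⟩ := by
        apply Fin.ext
        show u + 1 - 1 = u
        omega
      rw [e1]
      by_cases hc2 : 0 < u - 1
      · rw [dif_pos hc2] at h0
        rw [hAdj_pos s (u-1) (by omega) (by omega) (by omega) (by omega)]
        linarith [h0]
      · rw [dif_neg hc2] at h0
        rw [hAdj_zero s (u-1) (by omega)]
        linarith [h0]
    · rw [dif_neg hc1] at h0
      rw [hAdj_zero s (u+1) (by omega)]
      by_cases hc2 : 0 < u - 1
      · rw [dif_pos hc2] at h0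
        rw [hAdj_pos s (u-1) (by omega) (by omega) (by omega) (by omega)]
        linarith [h0]
      · rw [dif_neg hc2] at h0
        rw [hAdj_zero s (u-1) (by omega)]
        linarith [h0]
  -- the dual sequence ends at n
  have hjr : j (m+1+1) = n := by
    have key : ∀ t, t ≤ m+1 → i t * j (t+1) - i (t+1) * j t = n := by
      intro t
      induction t with
      | zero =>
        intro _
        show i 0 * j 1 - i 1 * j 0 = n
        rw [hi0, hi1, hj0, hj1]
        ring
      | succ k ih =>
        intro hk
        have h1 := hrec (k+1) (by omega) (by omega)
        have h2 := hjrec (k+1) (by omega) (by omega)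
        simp only [Nat.add_sub_cancel] at h1 h2
        have h3 := ih (by omega)
        rw [h2]
        have h4 : i (k+1+1) = b (k+1) * i (k+1) - i k := by linarith [h1]
        rw [h4]
        ring_nf
        ring_nf at h3
        linarith [h3]
    have := key (m+1) (by omega)
    rw [hir, hir1] at this
    linarith [this]
  -- the sum S
  set S : ℕ → ℤ := fun u => ∑ s ∈ Finset.Icc 1 (m+1), (g s - f s) * Adj s u with hSdef
  have hSrel : ∀ u, 1 ≤ u → u ≤ m+1 →
      S (u-1) - b u * S u + S (u+1) = -n * (g u - f u) := by
    intro u hu1 hu2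
    have hstep : S (u-1) - b u * S u + S (u+1)
        = ∑ s ∈ Finset.Icc 1 (m+1), (g s - f s)
            * (Adj s (u-1) - b u * Adj s u + Adj s (u+1)) := by
      rw [hSdef]
      simp only
      rw [Finset.mul_sum, ← Finset.sum_sub_distrib, ← Finset.sum_add_distrib]
      apply Finset.sum_congr rfl
      intro x _
      ring
    rw [hstep]
    have hstep2 : ∀ x ∈ Finset.Icc 1 (m+1), (g x - f x)
          * (Adj x (u-1) - b u * Adj x u + Adj x (u+1))
        = if x = u then (g x - f x) * -n else 0 := by
      intro x hx
      rw [Finset.mem_Icc] at hx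
      rw [hkey x u hx.1 hx.2 hu1 hu2]
      split_ifs <;> ring
    rw [Finset.sum_congr rfl hstep2, Finset.sum_ite_eq' (Finset.Icc 1 (m+1)) u
      (fun x => (g x - f x) * -n)]
    rw [if_pos (Finset.mem_Icc.mpr ⟨hu1, hu2⟩)]
    ring
  -- the master formula for e
  have hE : ∀ u, u ≤ m+1+1 →
      (n:ℚ) * e u = (a:ℚ) * (j u : ℚ) + (bb:ℚ) * (i u : ℚ)
        + (c:ℚ) * ((n:ℚ) - (i u : ℚ) - (j u : ℚ)) - (S u : ℚ) := by
    intro u hu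
    by_cases hu0 : u = 0
    · subst hu0
      have hS0 : S 0 = 0 := by
        rw [hSdef]
        apply Finset.sum_eq_zero
        intro x hx
        rw [hAdj_zero x 0 (by omega), mul_zero]
      rw [he0, hS0, hi0, hj0]
      push_cast
      ring
    · by_cases hur : u = m+1+1
      · subst hur
        have hS0 : S (m+1+1) = 0 := by
          rw [hSdef]
          apply Finset.sum_eq_zero
          intro x hx
          rw [hAdj_zero x (m+1+1) (by omega), mul_zero]
        rw [her1, hS0, hir1, hjr]
        push_cast
        ring
      · have hu1 : 1 ≤ u := by omega
        have hu2 : u ≤ m+1 := by omega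
        rw [hedef u hu1 hu2]
        have hSu : (S u : ℚ) = ∑ x ∈ Finset.Icc 1 (m+1), ((g x : ℚ) - (f x : ℚ)) * (η x u : ℚ) := by
          rw [hSdef]
          push_cast
          apply Finset.sum_congr rfl
          intro x hx
          rw [Finset.mem_Icc] at hx
          rw [hAdjeta x u hx.1 hx.2 hu1 hu2]
        rw [hSu]
        field_simp
  -- conclusion
  intro t ht1 htr
  have h1 := hE (t-1) (by omega)
  have h2 := hE t (by omega)
  have h3 := hE (t+1) (by omega)
  have hiQ : (i (t-1) : ℚ) = (b t : ℚ) * (i t : ℚ) - (i (t+1) : ℚ) := by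
    exact_mod_cast hrec t ht1 htr
  have hjQ : (j (t+1) : ℚ) = (b t : ℚ) * (j t : ℚ) - (j (t-1) : ℚ) := by
    exact_mod_cast hjrec t ht1 htr
  have hSQ : (S (t-1) : ℚ) - (b t : ℚ) * (S t : ℚ) + (S (t+1) : ℚ)
      = -(n:ℚ) * ((g t : ℚ) - (f t : ℚ)) := by
    exact_mod_cast hSrel t ht1 htr
  apply mul_left_cancel₀ hnQ
  linear_combination h1 - (b t : ℚ) * h2 + h3 + (a:ℚ) * hjQ + ((bb:ℚ) - (c:ℚ)) * hiQ - (c:ℚ) * hjQ - hSQ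
end

section
/- Let t ∈ {2, …, r+1} and let d be an integer with 0 ≤ d < j_t − j_{t−1}. Then the dual Wunram expansion (d_1, …, d_r) of d satisfies: d_k = 0 for every k ≥ t; d_{t−1} ≤ b_{t−1} − 2; and whenever d_k = b_k − 1 for some k < t−1, there exists l with k < l ≤ t−1 and d_l ≤ b_l − 3. -/
/-- Shape of the dual Wunram expansion of 0 ≤ d < j_t − j_{t−1}. -/
theorem stmt_15
    (n q : ℤ) (r : ℕ)
    (hq : 0 < q) (hqn : q < n) (hcop : IsCoprime q n)
    (hr : 1 ≤ r)
    (i b : ℕ → ℤ)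
    (hi0 : i 0 = n) (hi1 : i 1 = q)
    (hrec : ∀ t, 1 ≤ t → t ≤ r → i (t - 1) = b t * i t - i (t + 1))
    (hlt : ∀ t, 1 ≤ t → t ≤ r → 0 ≤ i (t + 1) ∧ i (t + 1) < i t)
    (hir : i r = 1) (hir1 : i (r + 1) = 0)
    (j : ℕ → ℤ) (hj0 : j 0 = 0) (hj1 : j 1 = 1)
    (hjrec : ∀ t, 1 ≤ t → t ≤ r → j (t + 1) = b t * j t - j (t - 1))
    (t : ℕ) (ht2 : 2 ≤ t) (htr : t ≤ r + 1)
    (d : ℤ) (hd0 : 0 ≤ d) (hd : d < j t - j (t - 1))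
    (dd : ℕ → ℤ)
    (hddnn : ∀ k, 1 ≤ k → k ≤ r → 0 ≤ dd k)
    (hdsum : d = ∑ k ∈ Finset.Icc 1 r, dd k * j k)
    (hdhead : ∀ t0, 1 ≤ t0 → t0 ≤ r + 1 →
      0 ≤ ∑ k ∈ Finset.Ico 1 t0, dd k * j k ∧
      ∑ k ∈ Finset.Ico 1 t0, dd k * j k < j t0) :
    (∀ k, t ≤ k → k ≤ r → dd k = 0) ∧
    dd (t - 1) ≤ b (t - 1) - 2 ∧
    (∀ k, 1 ≤ k → k < t - 1 → dd k = b k - 1 →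
      ∃ l, k < l ∧ l ≤ t - 1 ∧ dd l ≤ b l - 3) := by
  obtain ⟨u, rfl⟩ : ∃ u, t = u + 1 := ⟨t - 1, by omega⟩
  have hu1 : 1 ≤ u := by omega
  have hur : u ≤ r := by omega
  simp only [Nat.add_sub_cancel] at hd ⊢
  -- i is positive on [1, r]
  have hipos : ∀ m, 1 ≤ m → m ≤ r → 0 < i m := by
    intro m h1 h2
    obtain ⟨h3, h4⟩ := hlt m h1 h2
    linarith
  -- b ≥ 2 on [1, r]
  have hb2 : ∀ m, 1 ≤ m → m ≤ r → 2 ≤ b m := by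
    intro m h1 h2
    have hrm := hrec m h1 h2
    have h0 := (hlt m h1 h2).1
    have him : 0 < i m := hipos m h1 h2
    have hdec : i m < i (m - 1) := by
      rcases Nat.eq_or_lt_of_le h1 with h | h
      · rw [← h]
        simp only [Nat.sub_self]
        rw [hi0, hi1]; linarith
      · have := (hlt (m - 1) (by omega) (by omega)).2
        rwa [show m - 1 + 1 = m by omega] at this
    by_contra hb
    push_neg at hb
    nlinarith [mul_le_mul_of_nonneg_right (show b m ≤ 1 by omega) (le_of_lt him)]
  -- j grows by at least 1 at each step
  have hjstep : ∀ m, m ≤ r → 0 ≤ j m ∧ j m + 1 ≤ j (m + 1) := by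
    intro m
    induction m with
    | zero => intro _; rw [hj0, hj1]; norm_num
    | succ m ih =>
      intro h
      obtain ⟨h0, h1⟩ := ih (by omega)
      have hrm := hjrec (m + 1) (by omega) h
      have hb := hb2 (m + 1) (by omega) h
      simp only [Nat.add_sub_cancel] at hrm
      constructor
      · linarith
      · nlinarith [mul_le_mul_of_nonneg_right hb (show (0:ℤ) ≤ j (m+1) by linarith)]
  have hjnn : ∀ m, m ≤ r + 1 → 0 ≤ j m := by
    intro m h
    rcases Nat.lt_or_ge m (r + 1) with h' | h'
    · exact (hjstep m (by omega)).1
    · have hm : m = r + 1 := by omega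
      subst hm
      obtain ⟨a, c⟩ := hjstep r le_rfl
      linarith
  have hjpos : ∀ m, 1 ≤ m → m ≤ r + 1 → 1 ≤ j m := by
    intro m h1 h2
    have := hjstep (m - 1) (by omega)
    rw [show m - 1 + 1 = m by omega] at this
    linarith [this.1, this.2]
  have hjmono : ∀ a c : ℕ, a ≤ c → c ≤ r + 1 → j a ≤ j c := by
    intro a c hac
    induction c, hac using Nat.le_induction with
    | base => intro _; exact le_rfl
    | succ c hc ih =>
      intro h
      have := hjstep c (by omega)
      linarith [ih (by omega)]
  have htermnn : ∀ l ∈ Finset.Icc 1 r, 0 ≤ dd l * j l := by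
    intro l hl
    simp only [Finset.mem_Icc] at hl
    exact mul_nonneg (hddnn l hl.1 hl.2) (hjnn l (by omega))
  -- Part 1
  have part1 : ∀ k, u + 1 ≤ k → k ≤ r → dd k = 0 := by
    intro k hk1 hk2
    by_contra h
    have hk1' : 1 ≤ dd k := by have := hddnn k (by omega) hk2; omega
    have hsingle : dd k * j k ≤ d := by
      rw [hdsum]
      exact Finset.single_le_sum htermnn (Finset.mem_Icc.mpr ⟨by omega, hk2⟩)
    have hjk : j (u + 1) ≤ j k := hjmono (u + 1) k hk1 (by omega)
    have hju : 1 ≤ j u := hjpos u hu1 (by omega)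
    have hjk1 : 1 ≤ j k := hjpos k (by omega) (by omega)
    nlinarith [mul_le_mul_of_nonneg_right hk1' (show (0:ℤ) ≤ j k by linarith)]
  -- d equals the truncated sum
  have hdeq : d = ∑ l ∈ Finset.Ico 1 (u + 1), dd l * j l := by
    have h1 : (∑ l ∈ Finset.Ico 1 (u + 1), dd l * j l)
        + (∑ l ∈ Finset.Ico (u + 1) (r + 1), dd l * j l)
        = ∑ l ∈ Finset.Ico 1 (r + 1), dd l * j l :=
      Finset.sum_Ico_consecutive _ (by omega) (by omega)
    have hz : (∑ l ∈ Finset.Ico (u + 1) (r + 1), dd l * j l) = 0 := by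
      apply Finset.sum_eq_zero
      intro l hl
      simp only [Finset.mem_Ico] at hl
      rw [part1 l hl.1 (by omega), zero_mul]
    rw [hdsum, ← Finset.Ico_add_one_right_eq_Icc, ← h1, hz, add_zero]
  -- Part 2
  have part2 : dd u ≤ b u - 2 := by
    by_contra h
    push_neg at h
    have h' : b u - 1 ≤ dd u := by omega
    have hsplit : (∑ l ∈ Finset.Ico 1 (u + 1), dd l * j l)
        = (∑ l ∈ Finset.Ico 1 u, dd l * j l) + dd u * j u :=
      Finset.sum_Ico_succ_top (by omega) _
    have hlow := (hdhead u hu1 (by omega)).1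
    have hjr := hjrec u hu1 hur
    have hjum1 : 0 ≤ j (u - 1) := hjnn (u - 1) (by omega)
    have hju : 1 ≤ j u := hjpos u hu1 (by omega)
    nlinarith [mul_le_mul_of_nonneg_right h' (show (0:ℤ) ≤ j u by linarith)]
  refine ⟨part1, part2, ?_⟩
  -- Part 3
  intro k hk1 hk2 hdk
  by_contra h
  push_neg at h
  have h' : ∀ l, k < l → l ≤ u → b l - 2 ≤ dd l := by
    intro l hl1 hl2
    have := h l hl1 hl2
    omega
  have key : ∀ m, k ≤ m → m ≤ u →
      j (m + 1) - j m ≤ ∑ l ∈ Finset.Ico 1 (m + 1), dd l * j l := by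
    intro m hm
    induction m, hm using Nat.le_induction with
    | base =>
      intro hmu
      have hsplit : (∑ l ∈ Finset.Ico 1 (k + 1), dd l * j l)
          = (∑ l ∈ Finset.Ico 1 k, dd l * j l) + dd k * j k :=
        Finset.sum_Ico_succ_top (by omega) _
      have hlow := (hdhead k hk1 (by omega)).1
      have hjr := hjrec k hk1 (by omega)
      have hjkm1 : 0 ≤ j (k - 1) := hjnn (k - 1) (by omega)
      have hddk : dd k * j k = b k * j k - j k := by rw [hdk]; ring
      linarith
    | succ m hm ih =>
      intro hmu
      have ih' := ih (by omega)
      have hddm := h' (m + 1) (by omega) hmu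
      have hsplit : (∑ l ∈ Finset.Ico 1 (m + 2), dd l * j l)
          = (∑ l ∈ Finset.Ico 1 (m + 1), dd l * j l) + dd (m + 1) * j (m + 1) :=
        Finset.sum_Ico_succ_top (by omega) _
      have hjr := hjrec (m + 1) (by omega) (by omega)
      simp only [Nat.add_sub_cancel] at hjr
      have hjm1 : 0 ≤ j (m + 1) := hjnn (m + 1) (by omega)
      nlinarith [mul_le_mul_of_nonneg_right hddm hjm1]
  have hfin := key u (by omega) le_rfl
  rw [← hdeq] at hfin
  linarith
end
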